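/- arXiv:1403.0537 — 7 statements merged into one kernel-verified Lean document; each statement's English description precedes it below -/
import Mathlib

section
/- For 0 ≤ k ≤ 1 and x ≥ 0, the Rice Ie-function satisfies Ie(k,x) = (1/√(1-k²))·[1 - (1/π)·∫₀^π exp(-x(1-k²)/(1-k·cosθ)) dθ]. -/
open Real intervalIntegral

open MeasureTheory Set

/-- Modified Bessel function of the first kind, order zero. -/
noncomputable def besselI0 (z : ℝ) : ℝ := ∑' n : ℕ, (z / 2) ^ (2 * n) / (n.factorial : ℝ) ^ 2

/-- Rice Ie-function. -/
noncomputable def riceIe (k x : ℝ) : ℝ := ∫ t in (0:ℝ)..x, Real.exp (-t) * besselI0 (k * t)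


lemma cpos {k : ℝ} (hk0 : 0 ≤ k) (hk1 : k < 1) (θ : ℝ) : 0 < 1 - k * cos θ := by
  nlinarith [Real.neg_one_le_cos θ, Real.cos_le_one θ]

lemma hderiv_f {k : ℝ} (hk0 : 0 ≤ k) (hk1 : k < 1) {θ : ℝ} (hθ : θ ∈ Ioo (0:ℝ) π) :
    HasDerivAt (fun θ => arccos ((k - cos θ) / (1 - k * cos θ)))
      (-(Real.sqrt (1 - k ^ 2) / (1 - k * cos θ))) θ := by
  have hs : (0:ℝ) < 1 - k ^ 2 := by nlinarith
  have hsq : Real.sqrt (1 - k ^ 2) ^ 2 = 1 - k ^ 2 := Real.sq_sqrt hs.le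
  have hsqpos : 0 < Real.sqrt (1 - k ^ 2) := Real.sqrt_pos.2 hs
  have hcθ := cpos hk0 hk1 θ
  have hsinpos : 0 < sin θ := Real.sin_pos_of_pos_of_lt_pi hθ.1 hθ.2
  have hone_sub : 1 - ((k - cos θ) / (1 - k * cos θ)) ^ 2
      = (1 - k ^ 2) * sin θ ^ 2 / (1 - k * cos θ) ^ 2 := by
    have hsin : sin θ ^ 2 = 1 - cos θ ^ 2 := by nlinarith [Real.sin_sq_add_cos_sq θ]
    field_simp
    nlinarith [hsin]
  have husq : 0 < 1 - ((k - cos θ) / (1 - k * cos θ)) ^ 2 := by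
    rw [hone_sub]; positivity
  have hne1 : (k - cos θ) / (1 - k * cos θ) ≠ 1 := by nlinarith
  have hne1' : (k - cos θ) / (1 - k * cos θ) ≠ -1 := by nlinarith
  have hu_deriv : HasDerivAt (fun θ : ℝ => (k - cos θ) / (1 - k * cos θ))
      ((1 - k ^ 2) * sin θ / (1 - k * cos θ) ^ 2) θ := by
    have h1 : HasDerivAt (fun θ : ℝ => k - cos θ) (sin θ) θ := by
      simpa using ((Real.hasDerivAt_cos θ).const_sub k)
    have h2 : HasDerivAt (fun θ : ℝ => 1 - k * cos θ) (k * sin θ) θ := by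
      simpa [mul_comm] using (((Real.hasDerivAt_cos θ).const_mul k).const_sub 1)
    have := h1.div h2 hcθ.ne'
    refine this.congr_deriv ?_
    ring
  have harc := (Real.hasDerivAt_arccos hne1' hne1).comp θ hu_deriv
  have hsqrt : Real.sqrt (1 - ((k - cos θ) / (1 - k * cos θ)) ^ 2)
      = Real.sqrt (1 - k ^ 2) * sin θ / (1 - k * cos θ) := by
    rw [show 1 - ((k - cos θ) / (1 - k * cos θ)) ^ 2
        = (Real.sqrt (1 - k ^ 2) * sin θ / (1 - k * cos θ)) ^ 2 by
      rw [hone_sub, div_pow, mul_pow, hsq]]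
    exact Real.sqrt_sq (by positivity)
  refine harc.congr_deriv (Eq.symm ?_)
  rw [hsqrt, one_div_div, neg_mul, neg_inj, div_mul_div_comm,
    div_eq_div_iff (by positivity) (by positivity)]
  linear_combination sin θ * (1 - k * cos θ) ^ 2 * hsq

lemma rice_subst (k x : ℝ) (hk0 : 0 ≤ k) (hk1 : k < 1) :
    (∫ φ in (0:ℝ)..π, Real.exp (-x * (1 - k ^ 2) / (1 - k * cos φ)))
      = Real.sqrt (1 - k ^ 2) *
        ∫ θ in (0:ℝ)..π, Real.exp (-x * (1 - k * cos θ)) / (1 - k * cos θ) := by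
  have hπ : (0:ℝ) < π := Real.pi_pos
  have hs : (0:ℝ) < 1 - k ^ 2 := by nlinarith
  have hc : ∀ θ, 0 < 1 - k * cos θ := cpos hk0 hk1
  have hu_cont : Continuous fun θ : ℝ => (k - cos θ) / (1 - k * cos θ) :=
    Continuous.div (by continuity) (by continuity) (fun θ => (hc θ).ne')
  have key := intervalIntegral.integral_comp_smul_deriv'' (a := 0) (b := π)
    (f := fun θ => arccos ((k - cos θ) / (1 - k * cos θ)))
    (f' := fun θ => -(Real.sqrt (1 - k ^ 2) / (1 - k * cos θ)))
    (g := fun φ => Real.exp (-x * (1 - k ^ 2) / (1 - k * cos φ)))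
    (Real.continuous_arccos.comp hu_cont).continuousOn
    (by
      intro θ hθ
      rw [min_eq_left hπ.le, max_eq_right hπ.le] at hθ
      exact (hderiv_f hk0 hk1 hθ).hasDerivWithinAt)
    (Continuous.continuousOn (by
      exact Continuous.neg (Continuous.div continuous_const (by continuity)
        (fun θ => (hc θ).ne'))))
    (Continuous.continuousOn (Real.continuous_exp.comp
      (Continuous.div (by continuity) (by continuity) (fun φ => (hc φ).ne'))))
  have hu0 : (k - cos 0) / (1 - k * cos 0) = -1 := by
    rw [Real.cos_zero, div_eq_iff (by simpa using (hc 0).ne')]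
    ring
  have huπ : (k - cos π) / (1 - k * cos π) = 1 := by
    rw [Real.cos_pi, div_eq_iff (by simpa using (hc π).ne')]
    ring
  simp only [] at key
  rw [hu0, huπ, Real.arccos_neg_one, Real.arccos_one] at key
  -- simplify the integrand on the left of key
  have hgf : ∀ θ ∈ uIcc (0:ℝ) π,
      (fun θ => -(Real.sqrt (1 - k ^ 2) / (1 - k * cos θ))) θ •
        ((fun φ => Real.exp (-x * (1 - k ^ 2) / (1 - k * cos φ))) ∘
          fun θ => arccos ((k - cos θ) / (1 - k * cos θ))) θ
      = -(Real.sqrt (1 - k ^ 2)) *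
          (Real.exp (-x * (1 - k * cos θ)) / (1 - k * cos θ)) := by
    intro θ _
    have hcθ := hc θ
    have hmem1 : -1 ≤ (k - cos θ) / (1 - k * cos θ) := by
      rw [le_div_iff₀ hcθ]
      nlinarith [Real.neg_one_le_cos θ, Real.cos_le_one θ]
    have hmem2 : (k - cos θ) / (1 - k * cos θ) ≤ 1 := by
      rw [div_le_iff₀ hcθ]
      nlinarith [Real.neg_one_le_cos θ, Real.cos_le_one θ]
    simp only [Function.comp_apply, smul_eq_mul]
    rw [Real.cos_arccos hmem1 hmem2]
    have hval : 1 - k * ((k - cos θ) / (1 - k * cos θ)) = (1 - k ^ 2) / (1 - k * cos θ) := by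
      field_simp
      ring
    rw [hval]
    have harg : -x * (1 - k ^ 2) / ((1 - k ^ 2) / (1 - k * cos θ))
        = -x * (1 - k * cos θ) := by
      field_simp
    rw [harg]
    ring
  rw [intervalIntegral.integral_congr hgf, intervalIntegral.integral_const_mul,
    intervalIntegral.integral_symm 0 π] at key
  linarith [key]



lemma cos_pow_odd (m : ℕ) : ∫ θ in (0:ℝ)..π, cos θ ^ (2 * m + 1) = 0 := by
  have h := intervalIntegral.integral_comp_sub_left (fun θ => cos θ ^ (2 * m + 1)) π
    (a := 0) (b := π)
  simp only [sub_zero, sub_self] at h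
  have h2 : ∀ θ : ℝ, cos (π - θ) ^ (2 * m + 1) = -(cos θ ^ (2 * m + 1)) := by
    intro θ
    rw [Real.cos_pi_sub]
    rw [Odd.neg_pow ⟨m, by ring⟩]
  simp only [h2] at h
  rw [intervalIntegral.integral_neg] at h
  linarith

lemma cos_pow_even (m : ℕ) : ∫ θ in (0:ℝ)..π, cos θ ^ (2 * m)
    = π * ∏ i ∈ Finset.range m, (2 * (i:ℝ) + 1) / (2 * i + 2) := by
  have h1 : ∫ θ in (0:ℝ)..π, cos θ ^ (2 * m)
      = ∫ θ in (0:ℝ)..π, sin (θ + π/2) ^ (2 * m) := by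
    congr 1; ext θ; rw [Real.sin_add_pi_div_two]
  have h2 := intervalIntegral.integral_comp_add_right (fun θ => sin θ ^ (2 * m)) (π/2)
    (a := 0) (b := π)
  have hper : Function.Periodic (fun θ => sin θ ^ (2 * m)) π := by
    intro θ; simp only [Real.sin_add_pi, Even.neg_pow (even_two_mul m)]
  have h3 := hper.intervalIntegral_add_eq (π/2) 0
  rw [h1, h2]
  have : (0:ℝ) + π/2 = π/2 := by ring
  rw [this]
  have : π + π/2 = π/2 + π := by ring
  rw [this, h3]
  simp only [zero_add]
  exact integral_sin_pow_even m

lemma wallis_prod (m : ℕ) : ∏ i ∈ Finset.range m, (2 * (i:ℝ) + 1) / (2 * i + 2)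
    = ((2*m).factorial : ℝ) / (4 ^ m * (m.factorial : ℝ) ^ 2) := by
  induction m with
  | zero => simp
  | succ n ih =>
    rw [Finset.prod_range_succ, ih]
    have h1 : (2 * (n+1)) = (2*n+1) + 1 := by ring
    rw [h1]
    simp only [Nat.factorial_succ]
    push_cast
    have h2 : (0:ℝ) < (2*n).factorial := by positivity
    have h3 : (0:ℝ) < n.factorial := by positivity
    field_simp
    ring

lemma besselI0_eq_integral (z : ℝ) :
    besselI0 z = (1 / π) * ∫ θ in (0:ℝ)..π, Real.exp (z * cos θ) := by
  have hπ : (0:ℝ) < π := Real.pi_pos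
  -- expand exp as a series
  have hexp : ∀ θ : ℝ, Real.exp (z * cos θ) = ∑' n : ℕ, (z * cos θ) ^ n / n.factorial := by
    intro θ
    rw [Real.exp_eq_exp_ℝ, NormedSpace.exp_eq_tsum_div]
  -- interchange
  have hint : ∀ n : ℕ, IntegrableOn (fun θ : ℝ => (z * cos θ) ^ n / n.factorial) (Ioc 0 π) :=
    fun n => (Continuous.div_const (by continuity) _).integrableOn_Ioc
  have hbound : ∀ n : ℕ, ∫ θ in Ioc (0:ℝ) π, ‖(z * cos θ) ^ n / n.factorial‖ ≤ π * (|z| ^ n / n.factorial) := by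
    intro n
    have : ∀ θ ∈ Ioc (0:ℝ) π, ‖(z * cos θ) ^ n / n.factorial‖ ≤ |z| ^ n / n.factorial := by
      intro θ _
      have h1 : ‖(z * cos θ) ^ n / (n.factorial:ℝ)‖ = |z * cos θ| ^ n / (n.factorial:ℝ) := by
        rw [norm_div, norm_pow, Real.norm_eq_abs, Real.norm_natCast]
      have h2 : |z * cos θ| ≤ |z| := by
        rw [abs_mul]
        nlinarith [Real.abs_cos_le_one θ, abs_nonneg z, abs_nonneg (cos θ)]
      rw [h1]
      have h3 : (0:ℝ) < n.factorial := by positivity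
      gcongr
    calc ∫ θ in Ioc (0:ℝ) π, ‖(z * cos θ) ^ n / n.factorial‖
        ≤ ∫ _θ in Ioc (0:ℝ) π, |z| ^ n / n.factorial :=
          setIntegral_mono_on (hint n).norm (integrableOn_const (by
            simp [Real.volume_Ioc])) measurableSet_Ioc this
      _ = π * (|z| ^ n / n.factorial) := by
          rw [setIntegral_const]; simp [Real.volume_Ioc, ENNReal.toReal_ofReal hπ.le, hπ.le]
  have hsum : Summable fun n : ℕ => ∫ θ in Ioc (0:ℝ) π, ‖(z * cos θ) ^ n / n.factorial‖ := by
    apply Summable.of_nonneg_of_le (fun n => integral_nonneg (fun θ => norm_nonneg _)) hbound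
    exact (Real.summable_pow_div_factorial |z|).mul_left π
  have key : ∑' n : ℕ, ∫ θ in Ioc (0:ℝ) π, (z * cos θ) ^ n / n.factorial
      = ∫ θ in Ioc (0:ℝ) π, Real.exp (z * cos θ) := by
    rw [show (fun θ : ℝ => Real.exp (z * cos θ)) = fun θ => ∑' n : ℕ, (z * cos θ) ^ n / n.factorial
      from funext hexp] at *
    exact integral_tsum_of_summable_integral_norm hint hsum
  -- rewrite interval integral as set integral
  rw [← intervalIntegral.integral_of_le hπ.le] at key
  rw [← key]
  -- compute each term
  have hterm : ∀ n : ℕ, (∫ θ in Ioc (0:ℝ) π, (z * cos θ) ^ n / n.factorial)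
      = (z ^ n / n.factorial) * ∫ θ in (0:ℝ)..π, cos θ ^ n := by
    intro n
    rw [← intervalIntegral.integral_of_le hπ.le, ← intervalIntegral.integral_const_mul]
    congr 1; ext θ; rw [mul_pow]; ring
  simp only [hterm]
  -- split even/odd: odd terms vanish
  have hodd : ∀ n : ℕ, ¬ Even n → (z ^ n / n.factorial) * (∫ θ in (0:ℝ)..π, cos θ ^ n) = 0 := by
    intro n hn
    obtain ⟨m, rfl⟩ := Nat.not_even_iff_odd.1 hn
    rw [cos_pow_odd, mul_zero]
  have hsupp : Function.support (fun n : ℕ => (z ^ n / n.factorial) * ∫ θ in (0:ℝ)..π, cos θ ^ n)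
      ⊆ Set.range (fun m : ℕ => 2 * m) := by
    intro n hn
    by_contra hr
    apply hn
    apply hodd
    intro ⟨m, hm⟩
    exact hr ⟨m, show 2 * m = n by omega⟩
  rw [← Function.Injective.tsum_eq (fun a b h => by simp only at h; omega :
    Function.Injective (fun m : ℕ => 2 * m)) hsupp]
  have heven : ∀ m : ℕ, (z ^ (2*m) / (2*m).factorial) * (∫ θ in (0:ℝ)..π, cos θ ^ (2*m))
      = π * ((z / 2) ^ (2 * m) / (m.factorial : ℝ) ^ 2) := by
    intro m
    rw [cos_pow_even, wallis_prod]
    have h2 : (0:ℝ) < (2*m).factorial := by positivity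
    have h3 : (0:ℝ) < m.factorial := by positivity
    have h4 : (4:ℝ) ^ m = 2 ^ (2 * m) := by
      rw [show (4:ℝ) = 2 ^ 2 by norm_num, ← pow_mul]
    rw [div_pow, h4]
    field_simp
  simp only [heven]
  rw [tsum_mul_left, besselI0]
  field_simp

lemma exp_int (c x : ℝ) (hc : c ≠ 0) :
    ∫ t in (0:ℝ)..x, Real.exp (-(t * c)) = (1 - Real.exp (-(x * c))) / c := by
  have h : ∀ t : ℝ, Real.exp (-(t * c)) = Real.exp (-c * t) := by
    intro t; ring_nf
  simp only [h]
  rw [intervalIntegral.integral_comp_mul_left Real.exp (neg_ne_zero.2 hc)]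
  rw [integral_exp]
  simp only [mul_zero, Real.exp_zero, smul_eq_mul]
  field_simp
  ring

lemma rice_fubini (k x : ℝ) (hk0 : 0 ≤ k) (hk1 : k < 1) (hx : 0 ≤ x) :
    riceIe k x = (1 / π) * ∫ θ in (0:ℝ)..π,
      (1 - Real.exp (-(x * (1 - k * cos θ)))) / (1 - k * cos θ) := by
  have hπ : (0:ℝ) < π := Real.pi_pos
  have hc : ∀ θ, 0 < 1 - k * cos θ := cpos hk0 hk1
  have hF : Continuous (fun p : ℝ × ℝ => Real.exp (-(p.1 * (1 - k * cos p.2)))) :=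
    Real.continuous_exp.comp (Continuous.neg (continuous_fst.mul
      (continuous_const.sub (continuous_const.mul
        (Real.continuous_cos.comp continuous_snd)))))
  have step1 : riceIe k x = ∫ t in (0:ℝ)..x, (1 / π) *
      ∫ θ in (0:ℝ)..π, Real.exp (-(t * (1 - k * cos θ))) := by
    rw [riceIe]
    apply intervalIntegral.integral_congr
    intro t _
    dsimp only
    rw [besselI0_eq_integral, ← mul_assoc, mul_comm (Real.exp (-t)) (1/π), mul_assoc]
    congr 1
    rw [← intervalIntegral.integral_const_mul]
    apply intervalIntegral.integral_congr
    intro θ _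
    dsimp only
    rw [← Real.exp_add]
    congr 1
    ring
  -- convert to set integrals and swap
  have hint : IntegrableOn (fun p : ℝ × ℝ => Real.exp (-(p.1 * (1 - k * cos p.2))))
      (Ioc (0:ℝ) x ×ˢ Ioc (0:ℝ) π) := by
    have hK : IsCompact (Icc (0:ℝ) x ×ˢ Icc (0:ℝ) π) := isCompact_Icc.prod isCompact_Icc
    have h2 : IntegrableOn (fun p : ℝ × ℝ => Real.exp (-(p.1 * (1 - k * cos p.2))))
        (Icc (0:ℝ) x ×ˢ Icc (0:ℝ) π) := hF.continuousOn.integrableOn_compact hK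
    exact h2.mono_set (Set.prod_mono Ioc_subset_Icc_self Ioc_subset_Icc_self)
  have hswap : ∫ t in Ioc (0:ℝ) x, ∫ θ in Ioc (0:ℝ) π, Real.exp (-(t * (1 - k * cos θ)))
      = ∫ θ in Ioc (0:ℝ) π, ∫ t in Ioc (0:ℝ) x, Real.exp (-(t * (1 - k * cos θ))) := by
    apply MeasureTheory.integral_integral_swap
    rw [Measure.prod_restrict, ← Measure.volume_eq_prod]
    exact hint
  rw [step1, intervalIntegral.integral_const_mul]
  rw [intervalIntegral.integral_of_le hx]
  have heq1 : ∀ t : ℝ, (∫ θ in (0:ℝ)..π, Real.exp (-(t * (1 - k * cos θ))))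
      = ∫ θ in Ioc (0:ℝ) π, Real.exp (-(t * (1 - k * cos θ))) :=
    fun t => intervalIntegral.integral_of_le hπ.le
  simp only [heq1]
  rw [hswap]
  rw [← intervalIntegral.integral_of_le hπ.le]
  congr 1
  apply intervalIntegral.integral_congr
  intro θ _
  simp only [← intervalIntegral.integral_of_le hx]
  rw [exp_int _ _ (hc θ).ne']

theorem rice_Ie_eq (k x : ℝ) (hk0 : 0 ≤ k) (hk1 : k < 1) (hx : 0 ≤ x) :
    riceIe k x =
      (1 / Real.sqrt (1 - k ^ 2)) *
        (1 - (1 / π) * ∫ θ in (0:ℝ)..π,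
          Real.exp (-x * (1 - k ^ 2) / (1 - k * Real.cos θ))) := by
  have hπ : (0:ℝ) < π := Real.pi_pos
  have hs : (0:ℝ) < 1 - k ^ 2 := by nlinarith
  have hsq : 0 < Real.sqrt (1 - k ^ 2) := Real.sqrt_pos.2 hs
  have hc : ∀ θ, 0 < 1 - k * cos θ := cpos hk0 hk1
  have h1 := rice_fubini k x hk0 hk1 hx
  have hi1 : IntervalIntegrable (fun θ : ℝ => 1 / (1 - k * cos θ)) volume 0 π :=
    (Continuous.div continuous_const (by continuity) (fun θ => (hc θ).ne')).intervalIntegrable _ _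
  have hi2 : IntervalIntegrable (fun θ : ℝ => Real.exp (-x * (1 - k * cos θ)) / (1 - k * cos θ))
      volume 0 π :=
    (Continuous.div (by continuity) (by continuity) (fun θ => (hc θ).ne')).intervalIntegrable _ _
  have hsplit : (∫ θ in (0:ℝ)..π, (1 - Real.exp (-(x * (1 - k * cos θ)))) / (1 - k * cos θ))
      = (∫ θ in (0:ℝ)..π, 1 / (1 - k * cos θ))
        - ∫ θ in (0:ℝ)..π, Real.exp (-x * (1 - k * cos θ)) / (1 - k * cos θ) := by
    rw [← intervalIntegral.integral_sub hi1 hi2]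
    apply intervalIntegral.integral_congr
    intro θ _
    dsimp only
    rw [← sub_div]
    congr 2
    ring_nf
  have hzero := rice_subst k 0 hk0 hk1
  simp only [neg_zero, zero_mul, zero_div, Real.exp_zero] at hzero
  rw [intervalIntegral.integral_const] at hzero
  simp only [sub_zero, smul_eq_mul, mul_one] at hzero
  have hone : ∀ θ : ℝ, Real.exp 0 / (1 - k * cos θ) = 1 / (1 - k * cos θ) := by
    intro θ; rw [Real.exp_zero]
  have hxi := rice_subst k x hk0 hk1
  rw [h1, hsplit, hxi]
  have hπ' : π ≠ 0 := hπ.ne'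
  have hsq' : Real.sqrt (1 - k ^ 2) ≠ 0 := hsq.ne'
  set I1 := ∫ θ in (0:ℝ)..π, 1 / (1 - k * cos θ) with hI1
  set I2 := ∫ θ in (0:ℝ)..π, Real.exp (-x * (1 - k * cos θ)) / (1 - k * cos θ) with hI2
  have key2 : (1:ℝ)/π * I1 = 1/Real.sqrt (1 - k ^ 2) := by
    field_simp
    linear_combination -hzero
  calc (1/π) * (I1 - I2) = (1/π) * I1 - (1/π) * I2 := by ring
    _ = 1/Real.sqrt (1 - k ^ 2) - (1/π) * I2 := by rw [key2]
    _ = 1 / Real.sqrt (1 - k ^ 2) * (1 - 1/π * (Real.sqrt (1 - k ^ 2) * I2)) := by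
        field_simp
end

section
/- For U > V ≥ 0 and W = √(U² - V²), the identity W·∫₀^π e^{-(U - V·cosθ)}/(U - V·cosθ) dθ = ∫₀^π exp(-W²/(U - V·cosθ)) dθ holds. -/
open Real intervalIntegral

private lemma pawula_aux_deriv (U V W : ℝ) (hV : 0 ≤ V) (hUV : V < U)
    (hW2 : W ^ 2 = U ^ 2 - V ^ 2) (hWpos : 0 < W)
    (hden : ∀ θ : ℝ, 0 < U - V * Real.cos θ)
    (x : ℝ) (hx : x ∈ Set.Ioo (0:ℝ) π) :
    HasDerivAt (fun θ => Real.arccos ((V - U * Real.cos θ) / (U - V * Real.cos θ)))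
      (-(W / (U - V * Real.cos x))) x := by
  have hsin : 0 < Real.sin x := Real.sin_pos_of_pos_of_lt_pi hx.1 hx.2
  have hsq := Real.sin_sq_add_cos_sq x
  have hdx := hden x
  have hcos1 : Real.cos x < 1 := by nlinarith
  have hcosn1 : -1 < Real.cos x := by nlinarith
  set c : ℝ := (V - U * Real.cos x) / (U - V * Real.cos x) with hcdef
  have hnum : HasDerivAt (fun θ => V - U * Real.cos θ) (U * Real.sin x) x := by
    have := ((Real.hasDerivAt_cos x).const_mul U).const_sub V
    exact this.congr_deriv (by ring)
  have hd : HasDerivAt (fun θ => U - V * Real.cos θ) (V * Real.sin x) x := by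
    have := ((Real.hasDerivAt_cos x).const_mul V).const_sub U
    exact this.congr_deriv (by ring)
  have hcderiv : HasDerivAt (fun θ => (V - U * Real.cos θ) / (U - V * Real.cos θ))
      (W ^ 2 * Real.sin x / (U - V * Real.cos x) ^ 2) x := by
    have := hnum.div hd hdx.ne'
    refine this.congr_deriv ?_
    rw [hW2]; field_simp; ring
  have h2' : c < 1 := by
    rw [hcdef, div_lt_one (hden x)]
    nlinarith [mul_pos (sub_pos.mpr hUV) (by linarith : (0:ℝ) < 1 + Real.cos x)]
  have h1' : -1 < c := by
    rw [hcdef, lt_div_iff₀ (hden x)]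
    nlinarith [mul_pos (by linarith : (0:ℝ) < U + V) (by linarith : (0:ℝ) < 1 - Real.cos x)]
  have h1 : c ≠ -1 := ne_of_gt h1'
  have h2 : c ≠ 1 := ne_of_lt h2'
  have harc := (Real.hasDerivAt_arccos h1 h2).comp x hcderiv
  have hpos : 0 < W * Real.sin x / (U - V * Real.cos x) :=
    div_pos (mul_pos hWpos hsin) hdx
  have h1c : 1 - c ^ 2 = (W * Real.sin x / (U - V * Real.cos x)) ^ 2 := by
    rw [hcdef]
    field_simp
    nlinarith [hW2, hsq]
  have hsqrt : Real.sqrt (1 - c ^ 2) = W * Real.sin x / (U - V * Real.cos x) := by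
    rw [h1c, Real.sqrt_sq hpos.le]
  have heq : -(W / (U - V * Real.cos x))
      = -(1 / Real.sqrt (1 - c ^ 2)) * (W ^ 2 * Real.sin x / (U - V * Real.cos x) ^ 2) := by
    rw [hsqrt]
    have ha := hdx.ne'
    have hb := hWpos.ne'
    have hc := hsin.ne'
    field_simp
  rw [heq]
  exact harc

theorem pawula_identity (U V : ℝ) (hV : 0 ≤ V) (hUV : V < U) :
    Real.sqrt (U ^ 2 - V ^ 2) *
        ∫ θ in (0:ℝ)..π, Real.exp (-(U - V * Real.cos θ)) / (U - V * Real.cos θ) =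
      ∫ θ in (0:ℝ)..π,
        Real.exp (-(Real.sqrt (U ^ 2 - V ^ 2)) ^ 2 / (U - V * Real.cos θ)) := by
  have hU : 0 < U := lt_of_le_of_lt hV hUV
  set W := Real.sqrt (U ^ 2 - V ^ 2) with hWdef
  have hW2 : W ^ 2 = U ^ 2 - V ^ 2 := Real.sq_sqrt (by nlinarith)
  have hWpos : 0 < W := Real.sqrt_pos.mpr (by nlinarith)
  have hden : ∀ θ : ℝ, 0 < U - V * Real.cos θ := by
    intro θ
    have h1 := Real.neg_one_le_cos θ
    have h2 := Real.cos_le_one θ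
    nlinarith
  set c : ℝ → ℝ := fun θ => (V - U * Real.cos θ) / (U - V * Real.cos θ) with hcdef
  set f : ℝ → ℝ := fun θ => Real.arccos (c θ) with hfdef
  set f' : ℝ → ℝ := fun θ => -(W / (U - V * Real.cos θ)) with hf'def
  set g : ℝ → ℝ := fun u => Real.exp (-W ^ 2 / (U - V * Real.cos u)) with hgdef
  have hcle : ∀ x : ℝ, c x ≤ 1 := by
    intro x
    show (V - U * Real.cos x) / (U - V * Real.cos x) ≤ 1
    rw [div_le_one (hden x)]
    have h1 := Real.neg_one_le_cos x
    have h2 := Real.cos_le_one x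
    nlinarith
  have hcge : ∀ x : ℝ, -1 ≤ c x := by
    intro x
    show -1 ≤ (V - U * Real.cos x) / (U - V * Real.cos x)
    rw [le_div_iff₀ (hden x)]
    have h1 := Real.neg_one_le_cos x
    have h2 := Real.cos_le_one x
    nlinarith
  have hccont : Continuous c :=
    Continuous.div (by continuity) (by continuity) (fun θ => (hden θ).ne')
  have hfcont : Continuous f := Real.continuous_arccos.comp hccont
  have hf'cont : Continuous f' := by
    apply Continuous.neg
    exact Continuous.div continuous_const (by continuity) (fun θ => (hden θ).ne')
  have hgcont : Continuous g := by
    apply Real.continuous_exp.comp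
    exact Continuous.div continuous_const (by continuity) (fun θ => (hden θ).ne')
  have hderiv' : ∀ x ∈ Set.Ioo (min (0:ℝ) π) (max (0:ℝ) π),
      HasDerivWithinAt f (f' x) (Set.Ioi x) x := by
    intro x hx
    rw [min_eq_left Real.pi_pos.le, max_eq_right Real.pi_pos.le] at hx
    exact (pawula_aux_deriv U V W hV hUV hW2 hWpos hden x hx).hasDerivWithinAt
  have key : (∫ x in (0:ℝ)..π, (g ∘ f) x * f' x) = ∫ u in (f 0)..(f π), g u :=
    intervalIntegral.integral_comp_mul_deriv'' hfcont.continuousOn hderiv'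
      hf'cont.continuousOn hgcont.continuousOn
  have hf0 : f 0 = π := by
    have hc0 : c 0 = -1 := by
      show (V - U * Real.cos 0) / (U - V * Real.cos 0) = -1
      rw [Real.cos_zero, mul_one, mul_one, div_eq_iff (sub_pos.mpr hUV).ne']
      ring
    show Real.arccos (c 0) = π
    rw [hc0, Real.arccos_neg_one]
  have hfπ : f π = 0 := by
    have hcπ : c π = 1 := by
      show (V - U * Real.cos π) / (U - V * Real.cos π) = 1
      rw [Real.cos_pi]
      rw [div_eq_one_iff_eq (by nlinarith : U - V * (-1) ≠ 0)]
      ring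
    show Real.arccos (c π) = 0
    rw [hcπ, Real.arccos_one]
  have hgf : ∀ x : ℝ, (g ∘ f) x * f' x
      = -W * (Real.exp (-(U - V * Real.cos x)) / (U - V * Real.cos x)) := by
    intro x
    have hdx := hden x
    have hW2pos : (0:ℝ) < W ^ 2 := by positivity
    have hcos : Real.cos (f x) = c x := Real.cos_arccos (hcge x) (hcle x)
    have hUVc : U - V * c x = W ^ 2 / (U - V * Real.cos x) := by
      show U - V * ((V - U * Real.cos x) / (U - V * Real.cos x)) = W ^ 2 / (U - V * Real.cos x)
      rw [hW2]
      field_simp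
      ring
    have harg : -W ^ 2 / (U - V * Real.cos (f x)) = -(U - V * Real.cos x) := by
      rw [hcos, hUVc]
      rw [neg_div, div_div_eq_mul_div, mul_div_assoc, mul_comm,
        div_mul_cancel₀ _ hW2pos.ne']
    show Real.exp (-W ^ 2 / (U - V * Real.cos (f x))) * -(W / (U - V * Real.cos x))
      = -W * (Real.exp (-(U - V * Real.cos x)) / (U - V * Real.cos x))
    rw [harg]
    rw [div_eq_mul_inv, div_eq_mul_inv]
    ring
  have hleft : (∫ x in (0:ℝ)..π, (g ∘ f) x * f' x)
      = -W * ∫ x in (0:ℝ)..π, Real.exp (-(U - V * Real.cos x)) / (U - V * Real.cos x) := by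
    rw [← intervalIntegral.integral_const_mul]
    apply intervalIntegral.integral_congr
    intro x _
    exact hgf x
  have hright : (∫ u in (f 0)..(f π), g u) = -∫ u in (0:ℝ)..π, g u := by
    rw [hf0, hfπ, intervalIntegral.integral_symm]
  rw [hleft, hright] at key
  have hfin : (∫ θ in (0:ℝ)..π, Real.exp (-W ^ 2 / (U - V * Real.cos θ)))
      = ∫ u in (0:ℝ)..π, g u := rfl
  rw [hfin]
  linarith [key]
end

section
/- Let 0 < q ≤ 1, γ̄ > 0, and define γ(θ,q) = γ̄·(1 - ((1-q²)/(1+q²))·cosθ). Then for all x ≥ 0, (1/π)·∫₀^π (1/γ(θ,q))·e^{-x/γ(θ,q)} dθ = ((1+q²)/(2q·γ̄))·exp(-(1+q²)²·x/(4q²·γ̄))·I₀((1-q⁴)·x/(4q²·γ̄)). That is, the mixture of exponential densities with means γ(θ,q), θ uniform on [0,π], equals the squared Hoyt density. -/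
open Real intervalIntegral
open MeasureTheory Set

lemma int_cos_odd (m : ℕ) : ∫ θ in (0:ℝ)..π, Real.cos θ ^ (2*m+1) = 0 := by
  induction m with
  | zero => simp
  | succ k ih =>
      have h : 2*(k+1)+1 = (2*k+1)+2 := by ring
      rw [h, integral_cos_pow]
      simp [ih]

lemma int_cos_even (m : ℕ) : ∫ θ in (0:ℝ)..π, Real.cos θ ^ (2*m) =
    π * (2*m).factorial / (4^m * ((m.factorial : ℝ))^2) := by
  induction m with
  | zero => simp
  | succ k ih =>
      have h : 2*(k+1) = (2*k)+2 := by ring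
      rw [h, integral_cos_pow, ih]
      have e1 : (((2*k+2).factorial : ℝ)) = (2*k+2)*((2*k+1)*(2*k).factorial) := by
        rw [show 2*k+2 = (2*k+1)+1 from rfl, Nat.factorial_succ, Nat.factorial_succ]
        push_cast; ring
      have e2 : (((k+1).factorial : ℝ)) = (k+1)*(k.factorial) := by
        rw [Nat.factorial_succ]; push_cast; ring
      have h4 : (4:ℝ)^(k+1) = 4*4^k := by ring
      rw [e1, e2, h4]
      simp only [Real.sin_pi, Real.sin_zero, mul_zero, zero_mul, sub_zero, zero_sub, zero_div, neg_zero, zero_add]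
      have hf : ((k.factorial:ℝ)) ≠ 0 := Nat.cast_ne_zero.mpr k.factorial_ne_zero
      have h4k : (4:ℝ)^k ≠ 0 := by positivity
      have hk1 : ((k:ℝ)+1) ≠ 0 := by positivity
      have hk2 : (2*(k:ℝ)+2) ≠ 0 := by positivity
      push_cast
      field_simp
      ring

lemma besselI0_summable (z : ℝ) :
    Summable (fun n : ℕ => (z / 2) ^ (2 * n) / (n.factorial : ℝ) ^ 2) := by
  refine Summable.of_nonneg_of_le (fun n => ?_) (fun n => ?_)
    (Real.summable_pow_div_factorial ((z/2)^2))
  · rw [pow_mul]; positivity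
  · rw [pow_mul]
    have h1 : (1:ℝ) ≤ (n.factorial:ℝ) := by exact_mod_cast n.factorial_pos
    have h2 : (n.factorial:ℝ) ≤ (n.factorial:ℝ)^2 := by nlinarith
    gcongr


set_option maxHeartbeats 1000000 in
lemma exp_cos_int (z : ℝ) :
    ∫ θ in (0:ℝ)..π, Real.exp (z * Real.cos θ) = π * besselI0 z := by
  have hexp : ∀ y : ℝ, Real.exp y = ∑' n : ℕ, ((n.factorial : ℝ))⁻¹ * y ^ n := by
    intro y
    rw [Real.exp_eq_exp_ℝ, NormedSpace.exp_eq_tsum ℝ]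
    simp [smul_eq_mul]
  set F : ℕ → ℝ → ℝ := fun n θ => ((n.factorial : ℝ))⁻¹ * (z * Real.cos θ) ^ n with hF
  have hcont : ∀ n, Continuous (F n) := by intro n; fun_prop
  have hfpos : ∀ n : ℕ, (0:ℝ) < n.factorial := fun n => by exact_mod_cast n.factorial_pos
  have hbound : ∀ n θ, ‖F n θ‖ ≤ ((n.factorial : ℝ))⁻¹ * |z| ^ n := by
    intro n θ
    have h1 : ‖F n θ‖ = ((n.factorial:ℝ))⁻¹ * |z * Real.cos θ| ^ n := by
      rw [hF]
      simp only [Real.norm_eq_abs, abs_mul, abs_pow, abs_inv, Nat.abs_cast]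
    rw [h1]
    have hz : |z * Real.cos θ| ≤ |z| := by
      rw [abs_mul]
      calc |z| * |Real.cos θ| ≤ |z| * 1 := by gcongr; exact Real.abs_cos_le_one θ
        _ = |z| := mul_one _
    exact mul_le_mul_of_nonneg_left (pow_le_pow_left₀ (abs_nonneg _) hz n)
      (inv_nonneg.mpr (hfpos n).le)
  have hint : ∀ n : ℕ, Integrable (F n) (volume.restrict (Ioc (0:ℝ) π)) :=
    fun n => (hcont n).integrableOn_Ioc
  have hsumint : Summable (fun n => ∫ θ in Ioc (0:ℝ) π, ‖F n θ‖) := by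
    refine Summable.of_nonneg_of_le (fun n => integral_nonneg (fun θ => norm_nonneg _))
      (fun n => ?_) ((Real.summable_pow_div_factorial |z|).mul_left π)
    have : ∫ θ in Ioc (0:ℝ) π, ‖F n θ‖ ≤ ∫ _θ in Ioc (0:ℝ) π, ((n.factorial : ℝ))⁻¹ * |z| ^ n := by
      refine setIntegral_mono_on (hint n).norm (integrableOn_const ?_)
        measurableSet_Ioc (fun θ _ => hbound n θ)
      rw [Real.volume_Ioc]; exact ENNReal.ofReal_ne_top
    refine this.trans ?_
    rw [setIntegral_const, measureReal_def, Real.volume_Ioc, ENNReal.toReal_ofReal (sub_nonneg.mpr pi_pos.le)]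
    rw [smul_eq_mul, div_eq_mul_inv]
    ring_nf
    exact le_rfl
  have hswap : ∑' n, (∫ θ in Ioc (0:ℝ) π, F n θ) = ∫ θ in Ioc (0:ℝ) π, ∑' n, F n θ :=
    integral_tsum_of_summable_integral_norm hint hsumint
  have hFsum : ∀ θ : ℝ, ∑' n, F n θ = Real.exp (z * Real.cos θ) := fun θ => (hexp _).symm
  have key : ∫ θ in (0:ℝ)..π, Real.exp (z * Real.cos θ) = ∑' n, (∫ θ in (0:ℝ)..π, F n θ) := by
    rw [intervalIntegral.integral_of_le pi_pos.le]
    rw [show (fun θ => Real.exp (z * Real.cos θ)) = fun θ => ∑' n, F n θ from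
      funext (fun θ => (hFsum θ).symm)]
    rw [← hswap]
    exact tsum_congr (fun n => (intervalIntegral.integral_of_le pi_pos.le).symm)
  rw [key]
  have hval : ∀ n : ℕ, (∫ θ in (0:ℝ)..π, F n θ)
      = ((n.factorial:ℝ))⁻¹ * z^n * ∫ θ in (0:ℝ)..π, Real.cos θ^n := by
    intro n
    rw [hF]
    simp only [mul_pow, ← mul_assoc]
    exact intervalIntegral.integral_const_mul _ _
  have heven : ∀ m : ℕ, (∫ θ in (0:ℝ)..π, F (2*m) θ)
      = π * ((z/2)^(2*m) / ((m.factorial:ℝ))^2) := by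
    intro m
    rw [hval, int_cos_even]
    have hz4 : (z/2)^(2*m) = z^(2*m) / 4^m := by
      rw [div_pow, pow_mul z, pow_mul, show ((2:ℝ)^2 = 4) from by norm_num, ← pow_mul z]
    rw [hz4]
    have h1 : ((2*m).factorial:ℝ) ≠ 0 := (hfpos _).ne'
    have h2 : ((m.factorial:ℝ)) ≠ 0 := (hfpos _).ne'
    have h3 : (4:ℝ)^m ≠ 0 := by positivity
    field_simp
  have hodd : ∀ m : ℕ, (∫ θ in (0:ℝ)..π, F (2*m+1) θ) = 0 := by
    intro m
    rw [hval, int_cos_odd, mul_zero]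
  have hse : Summable (fun m => ∫ θ in (0:ℝ)..π, F (2*m) θ) := by
    rw [funext heven]
    exact (besselI0_summable z).mul_left π
  have hso : Summable (fun m => ∫ θ in (0:ℝ)..π, F (2*m+1) θ) := by
    rw [funext hodd]; exact summable_zero
  rw [← tsum_even_add_odd hse hso, funext heven, funext hodd, tsum_zero, add_zero,
    tsum_mul_left, besselI0]

lemma key_subst (t γbar x : ℝ) (ht0 : 0 ≤ t) (ht1 : t < 1) (hγ : 0 < γbar) :
    ∫ θ in (0:ℝ)..π, (1 / (γbar * (1 - t * Real.cos θ))) *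
        Real.exp (-x / (γbar * (1 - t * Real.cos θ))) =
      (π / (γbar * Real.sqrt (1 - t^2))) * Real.exp (-x / (γbar * (1 - t^2))) *
        besselI0 (t * x / (γbar * (1 - t^2))) := by
  have ht2 : 0 < 1 - t^2 := by nlinarith
  set s : ℝ := Real.sqrt (1 - t^2) with hs
  have hs0 : 0 < s := Real.sqrt_pos.mpr ht2
  have hs2 : s^2 = 1 - t^2 := Real.sq_sqrt ht2.le
  have hden : ∀ θ : ℝ, 0 < 1 - t * Real.cos θ := by
    intro θ; nlinarith [Real.cos_le_one θ, Real.neg_one_le_cos θ]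
  set h : ℝ → ℝ := fun φ => (t - Real.cos φ) / (1 - t * Real.cos φ) with hh
  set f : ℝ → ℝ := fun φ => Real.arccos (h φ) with hf
  set f' : ℝ → ℝ := fun φ => -(s / (1 - t * Real.cos φ)) with hf'
  set g : ℝ → ℝ := fun θ =>
    (1 / (γbar * (1 - t * Real.cos θ))) * Real.exp (-x / (γbar * (1 - t * Real.cos θ))) with hg
  have hhcont : Continuous h := by
    apply Continuous.div (by fun_prop) (by fun_prop)
    exact fun θ => (hden θ).ne'
  have hfcont : Continuous f := Real.continuous_arccos.comp hhcont
  have hgcont : Continuous g := by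
    apply Continuous.mul
    · apply Continuous.div continuous_const (by fun_prop)
      exact fun θ => (mul_pos hγ (hden θ)).ne'
    · apply Real.continuous_exp.comp
      apply Continuous.div continuous_const (by fun_prop)
      exact fun θ => (mul_pos hγ (hden θ)).ne'
  have hf'cont : Continuous f' := by
    apply Continuous.neg
    apply Continuous.div continuous_const (by fun_prop)
    exact fun θ => (hden θ).ne'
  have hmem : ∀ φ : ℝ, -1 ≤ h φ ∧ h φ ≤ 1 := by
    intro φ
    have hc1 := Real.cos_le_one φ
    have hc2 := Real.neg_one_le_cos φ
    have hd := hden φ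
    constructor
    · rw [hh, le_div_iff₀ hd]; nlinarith
    · rw [hh, div_le_one hd]; nlinarith
  have hderiv : ∀ φ ∈ Ioo (0:ℝ) π, HasDerivAt f (f' φ) φ := by
    intro φ hφ
    have hsin : 0 < Real.sin φ := Real.sin_pos_of_pos_of_lt_pi hφ.1 hφ.2
    have hc2 : Real.cos φ ^ 2 < 1 := by nlinarith [Real.sin_sq_add_cos_sq φ]
    have hd := hden φ
    have hlt : h φ < 1 := by rw [hh, div_lt_one hd]; nlinarith
    have hgt : -1 < h φ := by rw [hh, lt_div_iff₀ hd]; nlinarith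
    -- derivative of h
    have hd1 : HasDerivAt (fun φ => t - Real.cos φ) (Real.sin φ) φ := by
      simpa using (Real.hasDerivAt_cos φ).const_sub t
    have hd2 : HasDerivAt (fun φ => 1 - t * Real.cos φ) (t * Real.sin φ) φ := by
      simpa using ((Real.hasDerivAt_cos φ).const_mul t).const_sub 1
    have hdh : HasDerivAt h
        ((Real.sin φ * (1 - t * Real.cos φ) - (t - Real.cos φ) * (t * Real.sin φ)) /
          (1 - t * Real.cos φ)^2) φ := hd1.div hd2 hd.ne'
    have hda : HasDerivAt Real.arccos (-(1 / Real.sqrt (1 - h φ ^ 2))) (h φ) :=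
      Real.hasDerivAt_arccos hgt.ne' hlt.ne
    have hcomp := hda.comp φ hdh
    refine hcomp.congr_deriv (Eq.symm ?_)
    have hq : Real.sqrt (1 - h φ ^ 2) = s * Real.sin φ / (1 - t * Real.cos φ) := by
      have e : 1 - h φ ^ 2 = (s * Real.sin φ / (1 - t * Real.cos φ))^2 := by
        rw [hh]
        have hsin2 : Real.sin φ ^ 2 = 1 - Real.cos φ ^ 2 := Real.sin_sq φ
        field_simp
        nlinarith [hs2, hsin2]
      rw [e, Real.sqrt_sq (by positivity)]
    show -(s / (1 - t * Real.cos φ)) = _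
    rw [hq]
    field_simp
    linear_combination (-1 : ℝ) * hs2
  have hsub := intervalIntegral.integral_comp_smul_deriv''
    (f := f) (f' := f') (g := g) (a := (0:ℝ)) (b := π)
    (hfcont.continuousOn)
    (by
      rw [min_eq_left pi_pos.le, max_eq_right pi_pos.le]
      exact fun φ hφ => (hderiv φ hφ).hasDerivWithinAt)
    (hf'cont.continuousOn)
    (hgcont.continuousOn)
  have h1t : (1:ℝ) - t ≠ 0 := by nlinarith
  have hf0 : f 0 = π := by
    have e : h 0 = -1 := by
      show (t - Real.cos 0) / (1 - t * Real.cos 0) = -1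
      rw [Real.cos_zero, mul_one]
      field_simp
      ring
    show Real.arccos (h 0) = π
    rw [e, Real.arccos_neg_one]
  have hfpi : f π = 0 := by
    have e : h π = 1 := by
      show (t - Real.cos π) / (1 - t * Real.cos π) = 1
      rw [Real.cos_pi]
      rw [div_eq_one_iff_eq (by nlinarith)]
      ring
    show Real.arccos (h π) = 0
    rw [e, Real.arccos_one]
  rw [hf0, hfpi] at hsub
  have hmain : ∫ θ in (0:ℝ)..π, g θ = -∫ φ in (0:ℝ)..π, f' φ * g (f φ) := by
    rw [show ∫ φ in (0:ℝ)..π, f' φ * g (f φ) = ∫ φ in (0:ℝ)..π, f' φ • (g ∘ f) φ from rfl,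
      hsub, intervalIntegral.integral_symm]
  -- pointwise computation of the new integrand
  have hpt : ∀ φ : ℝ, f' φ * g (f φ) =
      -((1 / (γbar * s)) * (Real.exp (-x / (γbar * (1 - t^2))) *
        Real.exp ((t * x / (γbar * (1 - t^2))) * Real.cos φ))) := by
    intro φ
    have hd := hden φ
    have hcos : Real.cos (f φ) = h φ := Real.cos_arccos (hmem φ).1 (hmem φ).2
    have h1 : 1 - t * Real.cos (f φ) = (1 - t^2) / (1 - t * Real.cos φ) := by
      rw [hcos, hh]
      field_simp
      ring
    rw [hg, hf']
    simp only [h1]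
    rw [show -x / (γbar * ((1 - t^2) / (1 - t*Real.cos φ)))
        = -x / (γbar * (1-t^2)) + (t * x / (γbar * (1 - t^2))) * Real.cos φ from by
      field_simp
      ring, Real.exp_add]
    have : γbar * ((1 - t^2) / (1 - t * Real.cos φ)) ≠ 0 := by positivity
    field_simp
    rw [← hs2]
  rw [hmain, intervalIntegral.integral_congr (fun φ _ => hpt φ),
    intervalIntegral.integral_neg, neg_neg, intervalIntegral.integral_const_mul,
    intervalIntegral.integral_const_mul, exp_cos_int]
  field_simp

theorem hoyt_pdf_mixture (q γbar x : ℝ) (hq0 : 0 < q) (hq1 : q ≤ 1) (hγ : 0 < γbar)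
    (hx : 0 ≤ x) :
    (1 / π) * ∫ θ in (0:ℝ)..π,
        (1 / (γbar * (1 - (1 - q ^ 2) / (1 + q ^ 2) * Real.cos θ))) *
          Real.exp (-x / (γbar * (1 - (1 - q ^ 2) / (1 + q ^ 2) * Real.cos θ))) =
      ((1 + q ^ 2) / (2 * q * γbar)) * Real.exp (-((1 + q ^ 2) ^ 2 * x) / (4 * q ^ 2 * γbar)) *
        besselI0 ((1 - q ^ 4) * x / (4 * q ^ 2 * γbar)) := by
  have hq2 : 0 < 1 + q^2 := by positivity
  set t : ℝ := (1 - q^2) / (1 + q^2) with ht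
  have ht0 : 0 ≤ t := div_nonneg (by nlinarith) hq2.le
  have ht1 : t < 1 := by rw [ht, div_lt_one hq2]; nlinarith
  have e1 : 1 - t^2 = (2*q/(1+q^2))^2 := by rw [ht]; field_simp; ring
  have e2 : Real.sqrt (1 - t^2) = 2*q/(1+q^2) := by
    rw [e1, Real.sqrt_sq (by positivity)]
  have e3 : -x / (γbar * (1 - t^2)) = -((1 + q^2)^2 * x) / (4*q^2*γbar) := by
    rw [e1]; field_simp; ring
  have e4 : t * x / (γbar * (1 - t^2)) = (1 - q^4) * x / (4*q^2*γbar) := by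
    rw [e1, ht]; field_simp; ring
  rw [key_subst t γbar x ht0 ht1 hγ, e2, e3, e4]
  have hπ := Real.pi_ne_zero
  field_simp
end

section
/- Let γ̄_b, γ̄_e > 0, R_S ≥ 0, and let the eavesdropper SNR be squared-Hoyt distributed with mean γ̄_e and parameter q_e ∈ (0,1] (eccentricity ε_e = (1-q_e²)/(1+q_e²)), while the legitimate SNR is exponential with mean γ̄_b, independent. Then P(log₂(1+γ_b) - log₂(1+γ_e) < R_S) = 1 - (γ̄_b/(γ̄_b + 2^{R_S}γ̄_e))·exp(-(2^{R_S}-1)/γ̄_b)·[1 - (ε_e·2^{R_S}·γ̄_e/(γ̄_b + 2^{R_S}·γ̄_e))²]^{-1/2}. -/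
open Real MeasureTheory ProbabilityTheory intervalIntegral

set_option maxHeartbeats 1000000

lemma key_integral' {a b : ℝ} (hb : 0 ≤ b) (hab : b < a) :
    ∫ θ in (0:ℝ)..π, 1 / (a - b * Real.cos θ) = π / Real.sqrt (a^2 - b^2) := by
  have ha : 0 < a := lt_of_le_of_lt hb hab
  rcases eq_or_lt_of_le hb with hb0 | hb0
  · simp only [← hb0, zero_mul, sub_zero]
    norm_num
    simp [Real.sqrt_sq ha.le, one_div, smul_eq_mul, mul_comm]
    rw [div_eq_mul_inv]
  · set r := Real.sqrt (a^2 - b^2) with hrdef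
    have hr2 : r^2 = a^2 - b^2 := Real.sq_sqrt (by nlinarith)
    have hrpos : 0 < r := Real.sqrt_pos.2 (by nlinarith)
    have hra : r < a := by nlinarith
    set k := (a - r) / b with hkdef
    have hbk : b * k = a - r := by rw [hkdef]; field_simp
    have hk0 : 0 < k := div_pos (by linarith) hb0
    have hk1 : k < 1 := by
      rw [hkdef, div_lt_one hb0]; nlinarith
    have hksum : b * (1 + k^2) = 2 * a * k := by nlinarith [hbk, hr2]
    have hkdiff : b * (1 - k^2) = 2 * r * k := by nlinarith [hbk, hr2]
    clear hkdef hrdef hbk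
    clear_value r k
    set H : ℝ → ℝ := fun θ => (θ + 2 * Real.arctan (k * Real.sin θ / (1 - k * Real.cos θ))) / r with hH
    have hderiv : ∀ θ ∈ Set.uIcc (0:ℝ) π, HasDerivAt H (1 / (a - b * Real.cos θ)) θ := by
      intro θ _
      have hden : 0 < 1 - k * Real.cos θ := by
        nlinarith [Real.neg_one_le_cos θ, Real.cos_le_one θ]
      have hdd : HasDerivAt (fun x : ℝ => 1 - k * Real.cos x) (k * Real.sin θ) θ := by
        simpa using ((Real.hasDerivAt_cos θ).const_mul k).const_sub 1
      have hu : HasDerivAt (fun x => k * Real.sin x / (1 - k * Real.cos x))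
          ((k * Real.cos θ * (1 - k * Real.cos θ) - k * Real.sin θ * (k * Real.sin θ)) /
            (1 - k * Real.cos θ)^2) θ :=
        ((Real.hasDerivAt_sin θ).const_mul k).div hdd (ne_of_gt hden)
      have harc := (Real.hasDerivAt_arctan (k * Real.sin θ / (1 - k * Real.cos θ))).comp θ hu
      have hH' : HasDerivAt H ((1 + 2 * (1 / (1 + (k * Real.sin θ / (1 - k * Real.cos θ))^2) *
          ((k * Real.cos θ * (1 - k * Real.cos θ) - k * Real.sin θ * (k * Real.sin θ)) /
            (1 - k * Real.cos θ)^2))) / r) θ :=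
        ((hasDerivAt_id θ).add (harc.const_mul 2)).div_const r
      convert hH' using 1
      set c := Real.cos θ with hc
      set s := Real.sin θ with hsn
      have habc : 0 < a - b * c := by nlinarith [Real.cos_le_one θ]
      have hs : s ^ 2 = 1 - c ^ 2 := by nlinarith [Real.sin_sq_add_cos_sq θ]
      have hD : 0 < 1 + k^2 - 2*k*c := by
        nlinarith [Real.neg_one_le_cos θ, Real.cos_le_one θ]
      have h1u : 1 + (k * s / (1 - k * c))^2 = (1 + k^2 - 2*k*c) / (1 - k*c)^2 := by
        field_simp
        linear_combination k^2 * hs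
      rw [h1u]
      have e1 : k*c*(1 - k*c) - k*s*(k*s) = k*c - k^2 := by linear_combination (-(k^2))*hs
      have hnum : 1 + 2 * (1 / ((1 + k^2 - 2*k*c) / (1 - k*c)^2) *
          ((k*c*(1 - k*c) - k*s*(k*s)) / (1 - k*c)^2)) = (1 - k^2)/(1 + k^2 - 2*k*c) := by
        rw [e1]
        have hd2 : (1 - k*c) ≠ 0 := ne_of_gt hden
        have hD' : (1 + k^2 - 2*k*c) ≠ 0 := ne_of_gt hD
        field_simp
        ring
      rw [hnum]
      rw [div_div, div_eq_div_iff (ne_of_gt habc) (by positivity)]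
      have hgoal : b * (1 * ((1 + k^2 - 2*k*c) * r)) = b * ((1 - k^2) * (a - b*c)) := by
        linear_combination r * hksum - (a - b*c) * hkdiff
      exact (mul_left_cancel₀ (ne_of_gt hb0) hgoal)
    have hcont : Continuous fun θ : ℝ => 1 / (a - b * Real.cos θ) := by
      apply Continuous.div continuous_const (by continuity)
      intro θ; nlinarith [Real.cos_le_one θ]
    rw [intervalIntegral.integral_eq_sub_of_hasDerivAt hderiv (hcont.intervalIntegrable _ _)]
    simp [hH]

lemma exp_tail_integral' {lam : ℝ} (h : 0 < lam) :
    ∫ t in Set.Ioi (0:ℝ), lam * Real.exp (-(lam * t)) = 1 := by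
  have hderiv : ∀ t ∈ Set.Ioi (0:ℝ),
      HasDerivAt (fun t => -Real.exp (-(lam * t))) (lam * Real.exp (-(lam * t))) t := by
    intro t _
    have h1 : HasDerivAt (fun t : ℝ => -(lam * t)) (-lam) t := by
      simpa using ((hasDerivAt_id t).const_mul lam).fun_neg
    simpa [mul_comm] using h1.exp.fun_neg
  have htend : Filter.Tendsto (fun t => -Real.exp (-(lam * t))) Filter.atTop (nhds 0) := by
    have h1 : Filter.Tendsto (fun t : ℝ => -(lam * t)) Filter.atTop Filter.atBot :=
      Filter.tendsto_neg_atBot_iff.mpr ((Filter.tendsto_id (α := ℝ)).const_mul_atTop h)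
    simpa using (Real.tendsto_exp_atBot.comp h1).neg
  have hint : IntegrableOn (fun t => lam * Real.exp (-(lam * t))) (Set.Ioi (0:ℝ)) := by
    simpa [neg_mul, IntegrableOn] using (exp_neg_integrableOn_Ioi 0 h).const_mul lam
  have := MeasureTheory.integral_Ioi_of_hasDerivAt_of_tendsto
    (Continuous.continuousWithinAt (by continuity)) hderiv hint htend
  simpa using this

lemma exp_ftc' (s y : ℝ) : ∫ t in (0:ℝ)..y, s * Real.exp (-(s * t)) = 1 - Real.exp (-(s * y)) := by
  have hderiv : ∀ t ∈ Set.uIcc (0:ℝ) y,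
      HasDerivAt (fun t => -Real.exp (-(s * t))) (s * Real.exp (-(s * t))) t := by
    intro t _
    have h1 : HasDerivAt (fun t : ℝ => -(s * t)) (-s) t := by
      simpa using ((hasDerivAt_id t).const_mul s).fun_neg
    simpa [mul_comm] using h1.exp.fun_neg
  rw [intervalIntegral.integral_eq_sub_of_hasDerivAt hderiv (by
    apply Continuous.intervalIntegrable; continuity)]
  simp; ring

lemma aux_frac {s gv : ℝ} (hs : 0 < s) (hg : 0 < gv) :
    s / (s + gv⁻¹) = 1 - 1 / (1 + s * gv) := by
  have h1 : 0 < s + gv⁻¹ := by positivity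
  have h2 : 0 < 1 + s * gv := by positivity
  field_simp
  ring

lemma aux_exp_arg {s gv : ℝ} (t : ℝ) (hg : gv ≠ 0) :
    -(s * t) + -t / gv = -((s + gv⁻¹) * t) := by
  field_simp
  ring

lemma aux_h1 (c γ γe ε : ℝ) (hγ : γ ≠ 0) :
    (1 + c / γ * γe) ^ 2 - (c / γ * γe * ε) ^ 2
      = ((γ + c * γe) ^ 2 - (ε * c * γe) ^ 2) / γ ^ 2 := by
  field_simp

lemma aux_h2 (x D : ℝ) (hD : D ≠ 0) : 1 - (x / D) ^ 2 = (D ^ 2 - x ^ 2) / D ^ 2 := by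
  field_simp

lemma aux_final2 (E sN γ D : ℝ) (hsN : sN ≠ 0) (hD : D ≠ 0) :
    E * (1 / (sN / γ)) = γ / D * E * (1 / (sN / D)) := by
  rw [one_div_div, one_div_div]
  field_simp

lemma aux_final3 (rr : ℝ) (hπ : π ≠ 0) (hrr : rr ≠ 0) :
    1 / π * ((π - 0) • (1:ℝ) - π / rr) = 1 - 1 / rr := by
  rw [smul_eq_mul]
  field_simp
  ring

theorem secrecy_outage_hoyt_eve
    {Ω : Type*} [MeasurableSpace Ω] (P : Measure Ω) [IsProbabilityMeasure P]
    (γb γe : Ω → ℝ) (hmb : Measurable γb) (hme : Measurable γe)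
    (hindep : IndepFun γb γe P)
    (γbarb γbare RS qe : ℝ) (hγb : 0 < γbarb) (hγe : 0 < γbare)
    (hRS : 0 ≤ RS) (hqe0 : 0 < qe) (hqe1 : qe ≤ 1)
    (hbpos : ∀ ω, 0 ≤ γb ω) (hepos : ∀ ω, 0 ≤ γe ω)
    (hbcdf : ∀ a : ℝ, 0 ≤ a → (P {ω | γb ω ≤ a}).toReal = 1 - Real.exp (-a / γbarb))
    (hecdf : ∀ a : ℝ, 0 ≤ a → (P {ω | γe ω ≤ a}).toReal =
      1 - (1 / π) * ∫ θ in (0:ℝ)..π,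
        Real.exp (-a / (γbare * (1 - (1 - qe ^ 2) / (1 + qe ^ 2) * Real.cos θ)))) :
    (P {ω | Real.logb 2 (1 + γb ω) - Real.logb 2 (1 + γe ω) < RS}).toReal =
      1 - (γbarb / (γbarb + 2 ^ RS * γbare)) * Real.exp (-(2 ^ RS - 1) / γbarb) *
        (1 / Real.sqrt (1 -
          ((1 - qe ^ 2) / (1 + qe ^ 2) * 2 ^ RS * γbare / (γbarb + 2 ^ RS * γbare)) ^ 2)) := by
  -- basic abbreviations and positivity facts
  set ε : ℝ := (1 - qe ^ 2) / (1 + qe ^ 2) with hεdef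
  set c : ℝ := 2 ^ RS with hcdef
  have hq2 : (0:ℝ) < 1 + qe ^ 2 := by positivity
  have hε0 : 0 ≤ ε := div_nonneg (by nlinarith) hq2.le
  have hε1 : ε < 1 := by rw [hεdef, div_lt_one hq2]; nlinarith
  have hc1 : 1 ≤ c := by
    rw [hcdef, show (1:ℝ) = 2 ^ (0:ℝ) by simp]
    exact Real.rpow_le_rpow_of_exponent_le one_le_two hRS
  have hcpos : (0:ℝ) < c := lt_of_lt_of_le one_pos hc1
  set s : ℝ := c / γbarb with hsdef
  have hspos : 0 < s := div_pos hcpos hγb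
  set g : ℝ → ℝ := fun θ => γbare * (1 - ε * Real.cos θ) with hgdef
  have hgpos : ∀ θ, 0 < g θ := by
    intro θ
    have h1 := Real.neg_one_le_cos θ
    have h2 := Real.cos_le_one θ
    have : ε * Real.cos θ < 1 := by nlinarith
    have : 0 < 1 - ε * Real.cos θ := by linarith
    exact mul_pos hγe this
  have hgcont : Continuous g := by
    apply continuous_const.mul
    exact continuous_const.sub (continuous_const.mul Real.continuous_cos)
  set A : ℝ := 1 + s * γbare with hAdef
  set B : ℝ := s * γbare * ε with hBdef
  have hB0 : 0 ≤ B := by positivity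
  have hBA : B < A := by
    rw [hAdef, hBdef]
    nlinarith [mul_pos hspos hγe]
  have hABsq : 1 ≤ A ^ 2 - B ^ 2 := by
    have h1 : 1 ≤ A - B := by rw [hAdef, hBdef]; nlinarith [mul_pos hspos hγe]
    have h2 : 1 ≤ A + B := by rw [hAdef, hBdef]; nlinarith [mul_pos hspos hγe]
    nlinarith
  set Q : ℝ := 1 / Real.sqrt (A ^ 2 - B ^ 2) with hQdef
  have hsqrt1 : 1 ≤ Real.sqrt (A ^ 2 - B ^ 2) := by
    rw [show (1:ℝ) = Real.sqrt 1 by simp]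
    exact Real.sqrt_le_sqrt hABsq
  have hsqrtpos : 0 < Real.sqrt (A ^ 2 - B ^ 2) := lt_of_lt_of_le one_pos hsqrt1
  have hQ0 : 0 < Q := by rw [hQdef]; positivity
  have hQ1 : Q ≤ 1 := by
    rw [hQdef, div_le_one hsqrtpos]; exact hsqrt1
  -- the eavesdropper tail function
  set Ge : ℝ → ℝ := fun t => (1 / π) * ∫ θ in (0:ℝ)..π, Real.exp (-t / g θ) with hGedef
  have hexpcont : ∀ t : ℝ, Continuous fun θ => Real.exp (-t / g θ) := fun t =>
    Real.continuous_exp.comp (continuous_const.div hgcont fun θ => (hgpos θ).ne')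
  have hGe0 : ∀ t : ℝ, 0 ≤ Ge t := by
    intro t
    apply mul_nonneg (by positivity)
    apply intervalIntegral.integral_nonneg Real.pi_pos.le
    intro θ _; positivity
  have hGe1 : ∀ t : ℝ, 0 ≤ t → Ge t ≤ 1 := by
    intro t ht
    rw [hGedef]
    have hb : ∫ θ in (0:ℝ)..π, Real.exp (-t / g θ) ≤ ∫ θ in (0:ℝ)..π, (1:ℝ) := by
      apply intervalIntegral.integral_mono_on Real.pi_pos.le
        ((hexpcont t).intervalIntegrable _ _) (by apply Continuous.intervalIntegrable; continuity)
      intro θ _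
      rw [Real.exp_le_one_iff]
      have := hgpos θ
      apply div_nonpos_of_nonpos_of_nonneg <;> [linarith; linarith]
    rw [intervalIntegral.integral_const] at hb
    simp only [smul_eq_mul, sub_zero, mul_one] at hb
    calc (1/π) * ∫ θ in (0:ℝ)..π, Real.exp (-t / g θ) ≤ (1/π) * π := by
          apply mul_le_mul_of_nonneg_left hb (by positivity)
      _ = 1 := by field_simp
  have hGeAnti : Antitone Ge := by
    intro t1 t2 h12
    apply mul_le_mul_of_nonneg_left _ (by positivity : (0:ℝ) ≤ 1/π)
    apply intervalIntegral.integral_mono_on Real.pi_pos.le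
      ((hexpcont t2).intervalIntegrable _ _) ((hexpcont t1).intervalIntegrable _ _)
    intro θ _
    apply Real.exp_le_exp.2
    rw [div_le_div_iff₀ (hgpos θ) (hgpos θ)]
    nlinarith [hgpos θ]
  -- pushforward measures
  set μb : Measure ℝ := P.map γb with hμbdef
  set μe : Measure ℝ := P.map γe with hμedef
  haveI : IsProbabilityMeasure μb := Measure.isProbabilityMeasure_map hmb.aemeasurable
  haveI : IsProbabilityMeasure μe := Measure.isProbabilityMeasure_map hme.aemeasurable
  -- CDF facts
  have hIicB : ∀ a : ℝ, 0 ≤ a → μb (Set.Iic a) = ENNReal.ofReal (1 - Real.exp (-a / γbarb)) := by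
    intro a ha
    rw [hμbdef, Measure.map_apply hmb measurableSet_Iic]
    have h1 : (P (γb ⁻¹' Set.Iic a)) = ENNReal.ofReal ((P (γb ⁻¹' Set.Iic a)).toReal) :=
      (ENNReal.ofReal_toReal (measure_ne_top _ _)).symm
    rw [h1]
    congr 1
    exact hbcdf a ha
  have hIioB : ∀ a : ℝ, 0 ≤ a → μb (Set.Iio a) = ENNReal.ofReal (1 - Real.exp (-a / γbarb)) := by
    intro a ha
    rcases eq_or_lt_of_le ha with ha0 | ha0
    · rw [← ha0]
      have h1 : γb ⁻¹' Set.Iio 0 = ∅ := by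
        ext ω; simp only [Set.mem_preimage, Set.mem_Iio, Set.mem_empty_iff_false, iff_false, not_lt]
        exact hbpos ω
      rw [hμbdef, Measure.map_apply hmb measurableSet_Iio, h1]
      simp
    · have hU : Set.Iio a = ⋃ n : ℕ, Set.Iic (a - a / (n + 1)) := by
        ext x
        simp only [Set.mem_Iio, Set.mem_iUnion, Set.mem_Iic]
        constructor
        · intro hx
          obtain ⟨n, hn⟩ := exists_nat_gt (a / (a - x))
          refine ⟨n, ?_⟩
          have hax : 0 < a - x := by linarith
          rw [div_lt_iff₀ hax] at hn
          have hn1 : (0:ℝ) < (n:ℝ) + 1 := by positivity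
          have h2 : a / ((n:ℝ) + 1) ≤ a - x := by
            rw [div_le_iff₀ hn1]
            nlinarith
          linarith
        · rintro ⟨n, hn⟩
          have h3 : 0 < a / ((n:ℝ) + 1) := by positivity
          linarith
      have hmono : Monotone fun n : ℕ => Set.Iic (a - a / (n + 1)) := by
        intro m n hmn
        apply Set.Iic_subset_Iic.2
        have h4 : a / ((n:ℝ) + 1) ≤ a / ((m:ℝ) + 1) := by
          apply div_le_div_of_nonneg_left ha0.le (by positivity)
          exact_mod_cast by omega
        linarith
      have h1 := tendsto_measure_iUnion_atTop (μ := μb) hmono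
      rw [← hU] at h1
      have hnn : ∀ n : ℕ, (0:ℝ) ≤ a - a / (n + 1) := by
        intro n
        have : a / ((n:ℝ) + 1) ≤ a := div_le_self ha0.le (by norm_num)
        linarith
      have h1' : Filter.Tendsto (fun n : ℕ =>
          ENNReal.ofReal (1 - Real.exp (-(a - a / (n + 1)) / γbarb))) Filter.atTop
          (nhds (μb (Set.Iio a))) := by
        apply h1.congr
        intro n
        exact hIicB _ (hnn n)
      have hu : Filter.Tendsto (fun n : ℕ => a - a / ((n:ℝ) + 1)) Filter.atTop (nhds a) := by
        have h5 : Filter.Tendsto (fun n : ℕ => a / ((n:ℝ) + 1)) Filter.atTop (nhds 0) := by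
          have h6 := (tendsto_const_div_atTop_nhds_zero_nat a).comp
            (Filter.tendsto_add_atTop_nat 1)
          apply h6.congr
          intro n
          simp only [Function.comp]
          push_cast
          ring_nf
        simpa using (tendsto_const_nhds (x := a)).sub h5
      have h2' : Filter.Tendsto (fun n : ℕ =>
          ENNReal.ofReal (1 - Real.exp (-(a - a / (n + 1)) / γbarb))) Filter.atTop
          (nhds (ENNReal.ofReal (1 - Real.exp (-a / γbarb)))) := by
        have hcont2 : Continuous fun x : ℝ => ENNReal.ofReal (1 - Real.exp (-x / γbarb)) :=
          ENNReal.continuous_ofReal.comp (by continuity)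
        exact (hcont2.tendsto a).comp hu
      exact tendsto_nhds_unique h1' h2'
  have htailE : ∀ t : ℝ, 0 ≤ t → μe (Set.Ioi t) = ENNReal.ofReal (Ge t) := by
    intro t ht
    have hIicE : μe (Set.Iic t) = ENNReal.ofReal (1 - Ge t) := by
      rw [hμedef, Measure.map_apply hme measurableSet_Iic]
      rw [(ENNReal.ofReal_toReal (measure_ne_top _ _)).symm]
      congr 1
      exact hecdf t ht
    have h2 : Set.Ioi t = (Set.Iic t)ᶜ := Set.compl_Iic.symm
    rw [h2, measure_compl measurableSet_Iic (measure_ne_top _ _), measure_univ, hIicE]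
    rw [← ENNReal.ofReal_one, ← ENNReal.ofReal_sub 1 (by linarith [hGe1 t ht])]
    congr 1
    ring
  -- the event
  have hev : {ω | Real.logb 2 (1 + γb ω) - Real.logb 2 (1 + γe ω) < RS}
      = {ω | γb ω < c * (1 + γe ω) - 1} := by
    ext ω
    have h1b : (0:ℝ) < 1 + γb ω := by have := hbpos ω; linarith
    have h1e : (0:ℝ) < 1 + γe ω := by have := hepos ω; linarith
    simp only [Set.mem_setOf_eq]
    rw [← Real.logb_div (ne_of_gt h1b) (ne_of_gt h1e),
      Real.logb_lt_iff_lt_rpow (by norm_num) (div_pos h1b h1e), ← hcdef,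
      div_lt_iff₀ h1e]
    constructor <;> intro h <;> nlinarith
  have hSmeas : MeasurableSet {p : ℝ × ℝ | p.2 < c * (1 + p.1) - 1} :=
    measurableSet_lt measurable_snd (by fun_prop)
  have hpair : P.map (fun ω => (γe ω, γb ω)) = μe.prod μb :=
    (indepFun_iff_map_prod_eq_prod_map_map hme.aemeasurable hmb.aemeasurable).1 hindep.symm
  have hPev : P {ω | γb ω < c * (1 + γe ω) - 1}
      = ∫⁻ y, μb (Set.Iio (c * (1 + y) - 1)) ∂μe := by
    have h0 : {ω | γb ω < c * (1 + γe ω) - 1}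
        = (fun ω => (γe ω, γb ω)) ⁻¹' {p : ℝ × ℝ | p.2 < c * (1 + p.1) - 1} := rfl
    rw [h0, ← Measure.map_apply (hme.prodMk hmb) hSmeas, hpair,
      Measure.prod_apply hSmeas]
    rfl
  have hae : ∀ᵐ y ∂μe, 0 ≤ y := by
    rw [hμedef, ae_map_iff hme.aemeasurable (measurableSet_Ici (a := (0:ℝ)))]
    exact Filter.Eventually.of_forall hepos
  set E : ℝ := Real.exp (-(c - 1) / γbarb) with hEdef
  have hE0 : 0 < E := Real.exp_pos _
  have hE1 : E ≤ 1 := by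
    rw [hEdef, Real.exp_le_one_iff]
    apply div_nonpos_of_nonpos_of_nonneg <;> linarith
  have hK : (∫⁻ y, ENNReal.ofReal (Real.exp (-(s * y))) ∂μe) = ENNReal.ofReal Q := by
    set M : ENNReal := ∫⁻ y, ENNReal.ofReal (1 - Real.exp (-(s * y))) ∂μe with hMdef
    have hf_meas : Measurable fun y : ℝ => ENNReal.ofReal (1 - Real.exp (-(s * y))) :=
      Measurable.ennreal_ofReal (by fun_prop)
    have hf_le : (fun y : ℝ => ENNReal.ofReal (1 - Real.exp (-(s * y)))) ≤ᵐ[μe]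
        fun _ => 1 :=
      Filter.Eventually.of_forall fun y => by
        rw [← ENNReal.ofReal_one]
        exact ENNReal.ofReal_le_ofReal (by nlinarith [Real.exp_pos (-(s * y))])
    have hM_fin : M ≠ ⊤ := by
      apply ne_top_of_le_ne_top ENNReal.one_ne_top
      calc M ≤ ∫⁻ _, 1 ∂μe := lintegral_mono_ae hf_le
        _ = 1 := by rw [lintegral_one, measure_univ]
    -- step 1 : K = 1 - M
    have hKM : (∫⁻ y, ENNReal.ofReal (Real.exp (-(s * y))) ∂μe) = 1 - M := by
      have h0 : ∫⁻ y, ENNReal.ofReal (Real.exp (-(s * y))) ∂μe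
          = ∫⁻ y, ((fun _ : ℝ => (1:ENNReal)) y - ENNReal.ofReal (1 - Real.exp (-(s * y)))) ∂μe := by
        apply lintegral_congr_ae
        filter_upwards [hae] with y hy
        have he1 : Real.exp (-(s * y)) ≤ 1 := by
          rw [Real.exp_le_one_iff]; nlinarith
        rw [ENNReal.ofReal_sub 1 (Real.exp_pos _).le, ENNReal.ofReal_one,
          ENNReal.sub_sub_cancel ENNReal.one_ne_top (ENNReal.ofReal_le_one.2 he1)]
      rw [h0, lintegral_sub hf_meas hM_fin hf_le, lintegral_one, measure_univ, hMdef]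
    -- step 2 : pointwise layer-cake representation
    have hrep : ∀ y : ℝ, 0 ≤ y → ENNReal.ofReal (1 - Real.exp (-(s * y)))
        = ∫⁻ t in Set.Ioi (0:ℝ),
            ENNReal.ofReal (s * Real.exp (-(s * t))) * (Set.Ioi t).indicator 1 y := by
      intro y hy
      have h1 : ∀ t : ℝ, ENNReal.ofReal (s * Real.exp (-(s * t))) * (Set.Ioi t).indicator 1 y
          = (Set.Iio y).indicator (fun t => ENNReal.ofReal (s * Real.exp (-(s * t)))) t := by
        intro t
        by_cases h : t < y
        · rw [Set.indicator_of_mem (Set.mem_Ioi.2 h), Set.indicator_of_mem (Set.mem_Iio.2 h)]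
          simp
        · rw [Set.indicator_of_notMem (fun hc => h (Set.mem_Ioi.1 hc)),
            Set.indicator_of_notMem (fun hc => h (Set.mem_Iio.1 hc))]
          simp
      simp_rw [h1]
      rw [lintegral_indicator measurableSet_Iio,
        Measure.restrict_restrict measurableSet_Iio, Set.Iio_inter_Ioi]
      rw [← MeasureTheory.ofReal_integral_eq_lintegral_ofReal
        ((Continuous.integrableOn_Ioc (by fun_prop)).mono_set Set.Ioo_subset_Ioc_self)
        (Filter.Eventually.of_forall fun t => by positivity)]
      congr 1
      rw [← MeasureTheory.integral_Ioc_eq_integral_Ioo, ← intervalIntegral.integral_of_le hy]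
      exact (exp_ftc' s y).symm
    -- step 3 : Fubini (swap y and t)
    have hunc : Measurable (Function.uncurry fun (y t : ℝ) =>
        ENNReal.ofReal (s * Real.exp (-(s * t))) * (Set.Ioi t).indicator 1 y) := by
      have h2 : (Function.uncurry fun (y t : ℝ) =>
          ENNReal.ofReal (s * Real.exp (-(s * t))) * (Set.Ioi t).indicator 1 y)
          = fun p : ℝ × ℝ => ENNReal.ofReal (s * Real.exp (-(s * p.2)))
              * ({q : ℝ × ℝ | q.2 < q.1}.indicator 1 p) := by
        funext p
        by_cases h : p.2 < p.1 <;>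
          simp [Function.uncurry, Set.indicator, h, Set.mem_Ioi]
      rw [h2]
      exact (Measurable.ennreal_ofReal (by fun_prop)).mul
        (measurable_one.indicator (measurableSet_lt measurable_snd measurable_fst))
    have hswap : M = ∫⁻ t in Set.Ioi (0:ℝ),
        ENNReal.ofReal (s * Real.exp (-(s * t))) * μe (Set.Ioi t) := by
      rw [hMdef]
      rw [show (∫⁻ y, ENNReal.ofReal (1 - Real.exp (-(s * y))) ∂μe)
          = ∫⁻ y, (∫⁻ t in Set.Ioi (0:ℝ),
              ENNReal.ofReal (s * Real.exp (-(s * t))) * (Set.Ioi t).indicator 1 y) ∂μe from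
        lintegral_congr_ae (by filter_upwards [hae] with y hy; exact hrep y hy)]
      rw [lintegral_lintegral_swap hunc.aemeasurable]
      apply lintegral_congr
      intro t
      rw [lintegral_const_mul _ (measurable_one.indicator measurableSet_Ioi),
        lintegral_indicator_one measurableSet_Ioi]
    -- step 4 : insert the eavesdropper tail
    have hstep3 : M = ∫⁻ t in Set.Ioi (0:ℝ),
        ENNReal.ofReal (s * Real.exp (-(s * t)) * Ge t) := by
      rw [hswap]
      apply setLIntegral_congr_fun measurableSet_Ioi
      intro t ht
      dsimp only
      rw [htailE t (le_of_lt ht), ← ENNReal.ofReal_mul (by positivity)]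
    -- step 5 : expand Ge and swap t and θ
    have hGee : ∀ t : ℝ, ENNReal.ofReal (s * Real.exp (-(s * t)) * Ge t)
        = ∫⁻ θ in Set.Ioc (0:ℝ) π,
            ENNReal.ofReal ((1/π) * (s * Real.exp (-(s * t)) * Real.exp (-t / g θ))) := by
      intro t
      have h3 : s * Real.exp (-(s * t)) * Ge t
          = ∫ θ in (0:ℝ)..π, (1/π) * (s * Real.exp (-(s * t)) * Real.exp (-t / g θ)) := by
        rw [intervalIntegral.integral_const_mul]
        rw [intervalIntegral.integral_const_mul]
        rw [hGedef]
        ring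
      rw [intervalIntegral.integral_of_le Real.pi_pos.le] at h3
      rw [h3, MeasureTheory.ofReal_integral_eq_lintegral_ofReal
        (Continuous.integrableOn_Ioc (f := fun θ => (1/π) * (s * Real.exp (-(s * t)) * Real.exp (-t / g θ))) (continuous_const.mul (continuous_const.mul (hexpcont t))))
        (Filter.Eventually.of_forall fun θ => by positivity)]
    have hunc2 : Measurable (Function.uncurry fun (t θ : ℝ) =>
        ENNReal.ofReal ((1/π) * (s * Real.exp (-(s * t)) * Real.exp (-t / g θ)))) := by
      apply Measurable.ennreal_ofReal
      apply Continuous.measurable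
      apply continuous_const.mul
      apply Continuous.mul
      · exact continuous_const.mul
          (Real.continuous_exp.comp (Continuous.neg (continuous_const.mul continuous_fst)))
      · apply Real.continuous_exp.comp
        exact Continuous.div continuous_fst.neg (hgcont.comp continuous_snd)
          fun p => (hgpos p.2).ne'
    -- step 6 : inner integral in t
    have hinner : ∀ θ : ℝ, (∫⁻ t in Set.Ioi (0:ℝ),
        ENNReal.ofReal ((1/π) * (s * Real.exp (-(s * t)) * Real.exp (-t / g θ))))
        = ENNReal.ofReal ((1/π) * (s / (s + (g θ)⁻¹))) := by
      intro θ
      have hginv : 0 < (g θ)⁻¹ := inv_pos.2 (hgpos θ)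
      have hlam : 0 < s + (g θ)⁻¹ := by linarith
      have hptw : ∀ t : ℝ, (1/π) * (s * Real.exp (-(s * t)) * Real.exp (-t / g θ))
          = ((1/π) * (s / (s + (g θ)⁻¹)))
            * ((s + (g θ)⁻¹) * Real.exp (-((s + (g θ)⁻¹) * t))) := by
        intro t
        rw [mul_assoc, ← Real.exp_add, aux_exp_arg t (hgpos θ).ne']
        rw [mul_assoc, ← mul_assoc (s / (s + (g θ)⁻¹))]
        rw [div_mul_cancel₀ s (ne_of_gt hlam)]
      have h9 := (exp_neg_integrableOn_Ioi 0 hlam).const_mul (s + (g θ)⁻¹)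
      simp only [neg_mul] at h9
      simp_rw [hptw]
      rw [← MeasureTheory.ofReal_integral_eq_lintegral_ofReal (h9.const_mul _)
        (Filter.Eventually.of_forall fun t => by positivity)]
      rw [MeasureTheory.integral_const_mul, exp_tail_integral' hlam, mul_one]
    -- step 7 : the θ integral
    have houter : (∫⁻ θ in Set.Ioc (0:ℝ) π,
        ENNReal.ofReal ((1/π) * (s / (s + (g θ)⁻¹)))) = ENNReal.ofReal (1 - Q) := by
      have hcontg2 : Continuous fun θ => (1/π) * (s / (s + (g θ)⁻¹)) := by
        apply continuous_const.mul
        apply continuous_const.div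
        · exact continuous_const.add (Continuous.inv₀ hgcont fun θ => (hgpos θ).ne')
        · intro θ
          have : 0 < (g θ)⁻¹ := inv_pos.2 (hgpos θ)
          positivity
      rw [← MeasureTheory.ofReal_integral_eq_lintegral_ofReal
        (Continuous.integrableOn_Ioc hcontg2)
        (Filter.Eventually.of_forall fun θ => by
          have : 0 < (g θ)⁻¹ := inv_pos.2 (hgpos θ)
          positivity)]
      congr 1
      rw [← intervalIntegral.integral_of_le Real.pi_pos.le]
      rw [intervalIntegral.integral_const_mul]
      have heq : Set.EqOn (fun θ => s / (s + (g θ)⁻¹))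
          (fun θ => 1 - 1 / (A - B * Real.cos θ)) (Set.uIcc (0:ℝ) π) := by
        intro θ _
        have hABg : A - B * Real.cos θ = 1 + s * g θ := by
          rw [hAdef, hBdef, hgdef]
          ring
        show s / (s + (g θ)⁻¹) = 1 - 1 / (A - B * Real.cos θ)
        rw [hABg]
        exact aux_frac hspos (hgpos θ)
      rw [intervalIntegral.integral_congr heq]
      have hABcont : Continuous fun θ : ℝ => 1 / (A - B * Real.cos θ) := by
        apply continuous_const.div
        · exact continuous_const.sub (continuous_const.mul Real.continuous_cos)
        · intro θ
          have h1 := Real.neg_one_le_cos θ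
          have h2 := Real.cos_le_one θ
          nlinarith
      rw [intervalIntegral.integral_sub (continuous_const.intervalIntegrable _ _)
        (hABcont.intervalIntegrable _ _)]
      rw [key_integral' hB0 hBA, intervalIntegral.integral_const, hQdef]
      exact aux_final3 _ Real.pi_ne_zero (ne_of_gt hsqrtpos)
    rw [hKM]
    have hMval : M = ENNReal.ofReal (1 - Q) := by
      rw [hstep3]
      rw [show (∫⁻ t in Set.Ioi (0:ℝ), ENNReal.ofReal (s * Real.exp (-(s * t)) * Ge t))
          = ∫⁻ t in Set.Ioi (0:ℝ), (∫⁻ θ in Set.Ioc (0:ℝ) π,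
              ENNReal.ofReal ((1/π) * (s * Real.exp (-(s * t)) * Real.exp (-t / g θ)))) from
        lintegral_congr hGee]
      rw [lintegral_lintegral_swap hunc2.aemeasurable]
      rw [lintegral_congr hinner]
      exact houter
    rw [hMval, ENNReal.ofReal_sub 1 hQ0.le, ENNReal.ofReal_one,
      ENNReal.sub_sub_cancel ENNReal.one_ne_top (ENNReal.ofReal_le_one.2 hQ1)]
  have hmain : P {ω | γb ω < c * (1 + γe ω) - 1} = 1 - ENNReal.ofReal (E * Q) := by
    rw [hPev]
    have hstep1 : ∫⁻ y, μb (Set.Iio (c * (1 + y) - 1)) ∂μe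
        = ∫⁻ y, (1 - ENNReal.ofReal (E * Real.exp (-(s * y)))) ∂μe := by
      apply lintegral_congr_ae
      filter_upwards [hae] with y hy
      have harg : 0 ≤ c * (1 + y) - 1 := by nlinarith
      rw [hIioB _ harg]
      have hexp : Real.exp (-(c * (1 + y) - 1) / γbarb) = E * Real.exp (-(s * y)) := by
        rw [hEdef, ← Real.exp_add]
        congr 1
        rw [hsdef]
        field_simp
        ring
      rw [← hexp, ENNReal.ofReal_sub 1 (Real.exp_pos _).le, ENNReal.ofReal_one]
    rw [hstep1]
    have hg_meas : Measurable fun y : ℝ => ENNReal.ofReal (E * Real.exp (-(s * y))) :=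
      Measurable.ennreal_ofReal (by fun_prop)
    have hg_le : (fun y : ℝ => ENNReal.ofReal (E * Real.exp (-(s * y)))) ≤ᵐ[μe]
        fun _ => 1 := by
      filter_upwards [hae] with y hy
      rw [← ENNReal.ofReal_one]
      apply ENNReal.ofReal_le_ofReal
      have h7 : Real.exp (-(s * y)) ≤ 1 := by
        rw [Real.exp_le_one_iff]; nlinarith
      nlinarith [Real.exp_pos (-(s * y))]
    have hg_fin : (∫⁻ y, ENNReal.ofReal (E * Real.exp (-(s * y))) ∂μe) ≠ ⊤ := by
      apply ne_top_of_le_ne_top (ENNReal.one_ne_top)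
      calc (∫⁻ y, ENNReal.ofReal (E * Real.exp (-(s * y))) ∂μe)
          ≤ ∫⁻ _, 1 ∂μe := lintegral_mono_ae hg_le
        _ = 1 := by rw [lintegral_one, measure_univ]
    rw [lintegral_sub hg_meas hg_fin hg_le, lintegral_one, measure_univ]
    congr 1
    have hsplit : ∀ y : ℝ, ENNReal.ofReal (E * Real.exp (-(s * y)))
        = ENNReal.ofReal E * ENNReal.ofReal (Real.exp (-(s * y))) :=
      fun y => ENNReal.ofReal_mul hE0.le
    simp_rw [hsplit]
    have hmg2 : Measurable fun y : ℝ => ENNReal.ofReal (Real.exp (-(s * y))) :=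
      Measurable.ennreal_ofReal (by fun_prop)
    rw [lintegral_const_mul _ hmg2, hK, ← ENNReal.ofReal_mul hE0.le]
  -- final computation
  rw [hev, hmain]
  rw [ENNReal.toReal_sub_of_le (ENNReal.ofReal_le_one.2 (by nlinarith)) ENNReal.one_ne_top]
  rw [ENNReal.toReal_one, ENNReal.toReal_ofReal (by positivity)]
  congr 1
  set D : ℝ := γbarb + c * γbare with hDdef
  have hDpos : 0 < D := by rw [hDdef]; positivity
  set N : ℝ := D ^ 2 - (ε * c * γbare) ^ 2 with hNdef
  have hN : 0 < N := by
    rw [hNdef, hDdef]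
    have h8 : ε * c * γbare < γbarb + c * γbare := by nlinarith [mul_pos hcpos hγe]
    have h9 : 0 ≤ ε * c * γbare := by positivity
    nlinarith
  have hsN : 0 < Real.sqrt N := Real.sqrt_pos.2 hN
  have h1 : A ^ 2 - B ^ 2 = N / γbarb ^ 2 := by
    rw [hNdef, hDdef, hAdef, hBdef, hsdef]
    exact aux_h1 c γbarb γbare ε hγb.ne'
  have hsqrtAB : Real.sqrt (A ^ 2 - B ^ 2) = Real.sqrt N / γbarb := by
    rw [h1, Real.sqrt_div hN.le, Real.sqrt_sq hγb.le]
  have h2 : 1 - (ε * c * γbare / D) ^ 2 = N / D ^ 2 := by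
    rw [hNdef]
    exact aux_h2 _ _ hDpos.ne'
  have hsqrt2 : Real.sqrt (1 - (ε * c * γbare / D) ^ 2) = Real.sqrt N / D := by
    rw [h2, Real.sqrt_div hN.le, Real.sqrt_sq hDpos.le]
  rw [hQdef, hsqrtAB, hsqrt2]
  exact aux_final2 E (Real.sqrt N) γbarb D (ne_of_gt hsN) (ne_of_gt hDpos)
end

section
/- Let γ̄_b, γ̄_e > 0 and q_e ∈ (0,1] with ε_e = (1-q_e²)/(1+q_e²). If γ_b is exponential with mean γ̄_b and γ_e is squared Hoyt with mean γ̄_e and parameter q_e, independent, then P(γ_b > γ_e) = (γ̄_b/(γ̄_b + γ̄_e))·[1 - (ε_e·γ̄_e/(γ̄_b + γ̄_e))²]^{-1/2}. Moreover, for fixed γ̄_b, γ̄_e, this probability is decreasing in q_e. -/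
open Real MeasureTheory ProbabilityTheory intervalIntegral

section helpers
open Set Filter Topology
open scoped ENNReal NNReal

private lemma integral_one_div_one_sub_cos {a : ℝ} (h0 : 0 ≤ a) (h1 : a < 1) :
    ∫ θ in (0:ℝ)..π, 1 / (1 - a * Real.cos θ) = π / Real.sqrt (1 - a ^ 2) := by
  have h2 : 0 < 1 - a ^ 2 := by nlinarith
  set s : ℝ := Real.sqrt (1 - a ^ 2) with hs
  have hspos : 0 < s := Real.sqrt_pos.mpr h2
  have hs2 : s ^ 2 = 1 - a ^ 2 := Real.sq_sqrt h2.le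
  set k : ℝ := (1 + a) / s with hk
  have ha1 : (0:ℝ) < 1 + a := by linarith
  have hkpos : 0 < k := div_pos ha1 hspos
  have hks : k * s = 1 + a := div_mul_cancel₀ _ hspos.ne'
  have hden : ∀ θ : ℝ, 0 < 1 - a * Real.cos θ := by
    intro θ
    nlinarith [Real.cos_le_one θ, Real.neg_one_le_cos θ]
  set F : ℝ → ℝ := fun θ => (2 / s) * Real.arctan (k * Real.tan (θ / 2)) with hF
  set G : ℝ → ℝ := fun θ => if θ < π then F θ else π / s with hG
  have hGF : ∀ x : ℝ, x < π → G x = F x := fun x hx => if_pos hx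
  have hGpi : G π = π / s := if_neg (lt_irrefl _)
  have hFcont : ∀ x : ℝ, -π < x → x < π → ContinuousAt F x := by
    intro x hx' hx
    have hcos : Real.cos (x / 2) ≠ 0 :=
      (Real.cos_pos_of_mem_Ioo ⟨by linarith, by linarith⟩).ne'
    have htan : ContinuousAt Real.tan (x / 2) := Real.continuousAt_tan.mpr hcos
    have hdiv : ContinuousAt (fun θ : ℝ => θ / 2) x := continuousAt_id.div_const 2
    have h3 : ContinuousAt (fun θ : ℝ => Real.tan (θ / 2)) x :=
      ContinuousAt.comp (g := Real.tan) (f := fun θ : ℝ => θ / 2) htan hdiv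
    exact continuousAt_const.mul
      (Real.continuous_arctan.continuousAt.comp (continuousAt_const.mul h3))
  have hGderiv : ∀ x ∈ Set.Ioo (0:ℝ) π, HasDerivAt G (1 / (1 - a * Real.cos x)) x := by
    intro x hx
    have hcospos : 0 < Real.cos (x / 2) :=
      Real.cos_pos_of_mem_Ioo ⟨by linarith [hx.1, Real.pi_pos], by linarith [hx.2]⟩
    have hcos : Real.cos (x / 2) ≠ 0 := hcospos.ne'
    have h1' : HasDerivAt (fun θ : ℝ => θ / 2) (1 / 2) x := by
      simpa using (hasDerivAt_id x).div_const 2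
    have h2' : HasDerivAt Real.tan (1 / Real.cos (x / 2) ^ 2) (x / 2) := Real.hasDerivAt_tan hcos
    have h3 : HasDerivAt (fun θ : ℝ => Real.tan (θ / 2)) (1 / Real.cos (x / 2) ^ 2 * (1 / 2)) x :=
      by have := h2'.comp x h1'; exact this
    have h4 : HasDerivAt (fun θ : ℝ => k * Real.tan (θ / 2))
        (k * (1 / Real.cos (x / 2) ^ 2 * (1 / 2))) x := h3.const_mul k
    have h5 : HasDerivAt (fun θ : ℝ => Real.arctan (k * Real.tan (θ / 2)))
        (1 / (1 + (k * Real.tan (x / 2)) ^ 2) * (k * (1 / Real.cos (x / 2) ^ 2 * (1 / 2)))) x :=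
      by have := (Real.hasDerivAt_arctan (k * Real.tan (x / 2))).comp x h4; exact this
    have h6 : HasDerivAt F
        ((2 / s) * (1 / (1 + (k * Real.tan (x / 2)) ^ 2) *
          (k * (1 / Real.cos (x / 2) ^ 2 * (1 / 2))))) x :=
      h5.const_mul (2 / s)
    have hcx : Real.cos x = Real.cos (x/2) ^ 2 - Real.sin (x/2) ^ 2 := by
      have h2x : 2 * (x / 2) = x := by ring
      have h := Real.cos_two_mul' (x := x / 2)
      rw [h2x] at h
      exact h
    have hsc : Real.sin (x/2) ^ 2 + Real.cos (x/2) ^ 2 = 1 := Real.sin_sq_add_cos_sq _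
    have hk2 : k ^ 2 * s ^ 2 = (1 + a) ^ 2 := by
      rw [hk]; field_simp
    have hsc2 : (Real.sin (x/2) / Real.cos (x/2)) ^ 2 * Real.cos (x/2) ^ 2
        = Real.sin (x/2) ^ 2 := by
      rw [div_pow, div_mul_cancel₀ _ (pow_ne_zero 2 hcos)]
    have hTc : (1 + (k * Real.tan (x/2)) ^ 2) * Real.cos (x/2) ^ 2
        = Real.cos (x/2) ^ 2 + k ^ 2 * Real.sin (x/2) ^ 2 := by
      rw [Real.tan_eq_sin_div_cos]
      calc (1 + (k * (Real.sin (x/2) / Real.cos (x/2))) ^ 2) * Real.cos (x/2) ^ 2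
          = Real.cos (x/2) ^ 2
            + k ^ 2 * ((Real.sin (x/2) / Real.cos (x/2)) ^ 2 * Real.cos (x/2) ^ 2) := by ring
        _ = Real.cos (x/2) ^ 2 + k ^ 2 * Real.sin (x/2) ^ 2 := by rw [hsc2]
    have hTc2 : (1 + (k * Real.tan (x/2)) ^ 2) * Real.cos (x/2) ^ 2 * s ^ 2
        = (1 - a * Real.cos x) * (1 + a) := by
      rw [hTc]
      linear_combination Real.cos (x/2) ^ 2 * hs2 + Real.sin (x/2) ^ 2 * hk2
        + (1 + a) * hsc + a * (1 + a) * hcx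
    have heq : (2 / s) * (1 / (1 + (k * Real.tan (x / 2)) ^ 2) *
          (k * (1 / Real.cos (x / 2) ^ 2 * (1 / 2)))) = 1 / (1 - a * Real.cos x) := by
      have hT : (0:ℝ) < 1 + (k * Real.tan (x/2)) ^ 2 := by positivity
      have hkey : s * ((1 + (k * Real.tan (x/2)) ^ 2) * Real.cos (x/2) ^ 2)
          = k * (1 - a * Real.cos x) := by
        apply mul_left_cancel₀ hspos.ne'
        linear_combination hTc2 - (1 - a * Real.cos x) * hks
      have hstep : (2 / s) * (1 / (1 + (k * Real.tan (x / 2)) ^ 2) *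
            (k * (1 / Real.cos (x / 2) ^ 2 * (1 / 2))))
          = k / (s * ((1 + (k * Real.tan (x/2)) ^ 2) * Real.cos (x/2) ^ 2)) := by
        field_simp
      rw [hstep, hkey, div_mul_cancel_left₀ hkpos.ne', one_div]
    exact (heq ▸ h6).congr_of_eventuallyEq
      (Filter.eventuallyEq_of_mem (Iio_mem_nhds hx.2) fun θ hθ => hGF θ hθ)
  have hGcont : ContinuousOn G (Set.Icc 0 π) := by
    intro x hx
    rcases lt_or_eq_of_le hx.2 with hlt | heq
    · refine ((hFcont x (by linarith [hx.1, Real.pi_pos]) hlt).congr ?_).continuousWithinAt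
      exact Filter.eventuallyEq_of_mem (Iio_mem_nhds hlt) fun θ hθ => (hGF θ hθ).symm
    · subst heq
      unfold ContinuousWithinAt
      rw [hGpi]
      have hsub : Set.Icc (0:ℝ) π ⊆ Set.Iio π ∪ {π} := by
        intro y hy
        rcases lt_or_eq_of_le hy.2 with h | h
        · exact Or.inl h
        · exact Or.inr (by simp [h])
      refine Filter.Tendsto.mono_left ?_ (nhdsWithin_mono _ hsub)
      rw [nhdsWithin_union, nhdsWithin_singleton]
      refine Filter.Tendsto.sup ?_ ?_
      · have h1t : Filter.Tendsto (fun θ : ℝ => θ / 2) (nhdsWithin π (Set.Iio π))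
            (nhdsWithin (π/2) (Set.Iio (π/2))) := by
          apply tendsto_nhdsWithin_of_tendsto_nhds_of_eventually_within
          · exact ((continuous_id.div_const 2).continuousAt).mono_left nhdsWithin_le_nhds
          · exact eventually_nhdsWithin_of_forall fun θ (hθ : θ ∈ Set.Iio π) => by
              simp only [Set.mem_Iio] at hθ ⊢; linarith
        have h2t : Filter.Tendsto (fun θ : ℝ => Real.tan (θ / 2)) (nhdsWithin π (Set.Iio π))
            Filter.atTop := Real.tendsto_tan_pi_div_two.comp h1t
        have h3t : Filter.Tendsto (fun θ : ℝ => k * Real.tan (θ / 2)) (nhdsWithin π (Set.Iio π))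
            Filter.atTop := h2t.const_mul_atTop hkpos
        have h4t : Filter.Tendsto (fun θ : ℝ => Real.arctan (k * Real.tan (θ / 2)))
            (nhdsWithin π (Set.Iio π)) (nhds (π/2)) :=
          (Real.tendsto_arctan_atTop.mono_right nhdsWithin_le_nhds).comp h3t
        have h5t : Filter.Tendsto F (nhdsWithin π (Set.Iio π)) (nhds (π / s)) := by
          have h6t := h4t.const_mul (2 / s)
          have : (2 / s) * (π / 2) = π / s := by field_simp
          rw [this] at h6t
          exact h6t
        refine h5t.congr' ?_
        exact eventually_nhdsWithin_of_forall fun θ (hθ : θ ∈ Set.Iio π) => (hGF θ hθ).symm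
      · exact Filter.tendsto_pure_left.mpr fun U hU => by
          rw [hGpi]; exact mem_of_mem_nhds hU
  have hint : IntervalIntegrable (fun θ => 1 / (1 - a * Real.cos θ)) volume 0 π := by
    apply Continuous.intervalIntegrable
    exact continuous_const.div (continuous_const.sub (continuous_const.mul Real.continuous_cos))
      fun θ => (hden θ).ne'
  have hftc := intervalIntegral.integral_eq_sub_of_hasDeriv_right_of_le Real.pi_pos.le hGcont
    (fun x hx => (hGderiv x hx).hasDerivWithinAt) hint
  rw [hftc, hGpi, hGF 0 Real.pi_pos]
  have hF0 : F 0 = 0 := by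
    simp [hF, Real.tan_zero]
  rw [hF0, sub_zero]

private lemma exp_interval_integral {c : ℝ} (hc : 0 < c) (x : ℝ) :
    ∫ y in (0:ℝ)..x, (1 / c) * Real.exp (-y / c) = 1 - Real.exp (-x / c) := by
  have hder : ∀ y ∈ Set.uIcc (0:ℝ) x,
      HasDerivAt (fun y => -Real.exp (-y / c)) ((1 / c) * Real.exp (-y / c)) y := by
    intro y hy
    have h1 : HasDerivAt (fun y : ℝ => -y / c) (-1 / c) y := by
      simpa using ((hasDerivAt_id y).neg.div_const c)
    have h2 := (Real.hasDerivAt_exp (-y / c)).comp y h1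
    have h3 := h2.neg
    exact h3.congr_deriv (by ring)
  have hint : IntervalIntegrable (fun y => (1 / c) * Real.exp (-y / c)) volume 0 x :=
    (continuous_const.mul ((Real.continuous_exp.comp (continuous_id.neg.div_const c)))).intervalIntegrable _ _
  rw [intervalIntegral.integral_eq_sub_of_hasDerivAt hder hint]
  simp
  ring

private lemma exp_Ioi_integral {r : ℝ} (hr : 0 < r) :
    ∫ y in Set.Ioi (0:ℝ), Real.exp (-(r * y)) = 1 / r := by
  have hder : ∀ y ∈ Set.Ici (0:ℝ),
      HasDerivAt (fun y => -(1 / r) * Real.exp (-(r * y))) (Real.exp (-(r * y))) y := by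
    intro y hy
    have h1 : HasDerivAt (fun y : ℝ => -(r * y)) (-r) y := by
      exact (((hasDerivAt_id y).const_mul r).neg).congr_deriv (by simp)
    have h2 := (Real.hasDerivAt_exp (-(r * y))).comp y h1
    have h3 := h2.const_mul (-(1 / r))
    exact h3.congr_deriv (by field_simp)
  have hint : IntegrableOn (fun y => Real.exp (-(r * y))) (Set.Ioi 0) := by
    have := exp_neg_integrableOn_Ioi 0 hr
    simpa [mul_comm] using this
  have htend : Filter.Tendsto (fun y => -(1 / r) * Real.exp (-(r * y))) Filter.atTop (nhds 0) := by
    have h0 : Filter.Tendsto (fun y : ℝ => r * y) Filter.atTop Filter.atTop :=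
      Filter.tendsto_id.const_mul_atTop hr
    have h1 : Filter.Tendsto (fun y : ℝ => -(r * y)) Filter.atTop Filter.atBot :=
      Filter.tendsto_neg_atTop_atBot.comp h0
    have h2 : Filter.Tendsto (fun y : ℝ => Real.exp (-(r * y))) Filter.atTop (nhds 0) :=
      Real.tendsto_exp_atBot.comp h1
    have h3 := h2.const_mul (-(1 / r))
    simpa using h3
  have := MeasureTheory.integral_Ioi_of_hasDerivAt_of_tendsto' hder hint htend
  rw [this]
  simp

private lemma anti_part {γbarb γbare : ℝ} (hγb : 0 < γbarb) (hγe : 0 < γbare) :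
    StrictAntiOn (fun q : ℝ => (γbarb / (γbarb + γbare)) *
        (1 / Real.sqrt (1 -
          ((1 - q ^ 2) / (1 + q ^ 2) * γbare / (γbarb + γbare)) ^ 2)))
      (Set.Ioc 0 1) := by
  have hsum : 0 < γbarb + γbare := by linarith
  have hs1 : γbare / (γbarb + γbare) ≤ 1 := by
    rw [div_le_one hsum]; linarith
  have hspos : 0 < γbare / (γbarb + γbare) := div_pos hγe hsum
  set A : ℝ → ℝ := fun q => (1 - q ^ 2) / (1 + q ^ 2) * γbare / (γbarb + γbare) with hA
  have hA0 : ∀ r : ℝ, r ∈ Set.Ioc (0:ℝ) 1 → 0 ≤ A r ∧ A r < 1 := by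
    intro r hr
    have h1 : (0:ℝ) < 1 + r ^ 2 := by positivity
    have h2 : 0 ≤ (1 - r ^ 2) / (1 + r ^ 2) := by
      apply div_nonneg _ h1.le
      nlinarith [hr.2, hr.1]
    have h3 : (1 - r ^ 2) / (1 + r ^ 2) < 1 := by
      rw [div_lt_one h1]
      nlinarith [hr.1]
    have hrw : A r = (1 - r ^ 2) / (1 + r ^ 2) * (γbare / (γbarb + γbare)) := by
      rw [hA]; ring
    constructor
    · rw [hrw]; exact mul_nonneg h2 hspos.le
    · rw [hrw]
      calc (1 - r ^ 2) / (1 + r ^ 2) * (γbare / (γbarb + γbare))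
          ≤ (1 - r ^ 2) / (1 + r ^ 2) := mul_le_of_le_one_right h2 hs1
        _ < 1 := h3
  intro p hp q hq hpq
  have hAdec : A q < A p := by
    have h1 : (0:ℝ) < 1 + p ^ 2 := by positivity
    have h2 : (0:ℝ) < 1 + q ^ 2 := by positivity
    have h3 : (1 - q ^ 2) / (1 + q ^ 2) < (1 - p ^ 2) / (1 + p ^ 2) := by
      rw [div_lt_div_iff₀ h2 h1]
      nlinarith [hp.1, hpq]
    have hrwp : A p = (1 - p ^ 2) / (1 + p ^ 2) * (γbare / (γbarb + γbare)) := by rw [hA]; ring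
    have hrwq : A q = (1 - q ^ 2) / (1 + q ^ 2) * (γbare / (γbarb + γbare)) := by rw [hA]; ring
    rw [hrwp, hrwq]
    exact mul_lt_mul_of_pos_right h3 hspos
  obtain ⟨hq0, hq1⟩ := hA0 q hq
  obtain ⟨hp0, hp1⟩ := hA0 p hp
  have hsq : A q ^ 2 < A p ^ 2 := by nlinarith
  have h1p : 0 < 1 - A p ^ 2 := by nlinarith
  have h1q : 0 < 1 - A q ^ 2 := by nlinarith
  have hsqrt : Real.sqrt (1 - A p ^ 2) < Real.sqrt (1 - A q ^ 2) :=
    Real.sqrt_lt_sqrt h1p.le (by linarith)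
  have hsp : 0 < Real.sqrt (1 - A p ^ 2) := Real.sqrt_pos.mpr h1p
  have hdiv : 1 / Real.sqrt (1 - A q ^ 2) < 1 / Real.sqrt (1 - A p ^ 2) :=
    one_div_lt_one_div_of_lt hsp hsqrt
  have hC : 0 < γbarb / (γbarb + γbare) := div_pos hγb hsum
  simp only
  calc γbarb / (γbarb + γbare) * (1 / Real.sqrt (1 - ((1 - q ^ 2) / (1 + q ^ 2) * γbare / (γbarb + γbare)) ^ 2))
      = γbarb / (γbarb + γbare) * (1 / Real.sqrt (1 - A q ^ 2)) := rfl
    _ < γbarb / (γbarb + γbare) * (1 / Real.sqrt (1 - A p ^ 2)) := by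
        exact mul_lt_mul_of_pos_left hdiv hC
    _ = γbarb / (γbarb + γbare) * (1 / Real.sqrt (1 - ((1 - p ^ 2) / (1 + p ^ 2) * γbare / (γbarb + γbare)) ^ 2)) := rfl

private theorem positive_secrecy_hoyt_eve_main
    {Ω : Type*} [MeasurableSpace Ω] (P : Measure Ω) [IsProbabilityMeasure P]
    (γb γe : Ω → ℝ) (hmb : Measurable γb) (hme : Measurable γe)
    (hindep : IndepFun γb γe P)
    (γbarb γbare qe : ℝ) (hγb : 0 < γbarb) (hγe : 0 < γbare)
    (hqe0 : 0 < qe) (hqe1 : qe ≤ 1)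
    (hbpos : ∀ ω, 0 ≤ γb ω) (hepos : ∀ ω, 0 ≤ γe ω)
    (hbcdf : ∀ a : ℝ, 0 ≤ a → (P {ω | γb ω ≤ a}).toReal = 1 - Real.exp (-a / γbarb))
    (hecdf : ∀ a : ℝ, 0 ≤ a → (P {ω | γe ω ≤ a}).toReal =
      1 - (1 / π) * ∫ θ in (0:ℝ)..π,
        Real.exp (-a / (γbare * (1 - (1 - qe ^ 2) / (1 + qe ^ 2) * Real.cos θ)))) :
    (P {ω | γe ω < γb ω}).toReal =
      (γbarb / (γbarb + γbare)) *
        (1 / Real.sqrt (1 -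
          ((1 - qe ^ 2) / (1 + qe ^ 2) * γbare / (γbarb + γbare)) ^ 2)) := by
  set ε : ℝ := (1 - qe ^ 2) / (1 + qe ^ 2) with hεdef
  have hq2 : (0:ℝ) < 1 + qe ^ 2 := by positivity
  have hε0 : 0 ≤ ε := div_nonneg (by nlinarith) hq2.le
  have hε1 : ε < 1 := by rw [hεdef, div_lt_one hq2]; nlinarith
  have hsum : 0 < γbarb + γbare := by linarith
  set c : ℝ → ℝ := fun θ => γbare * (1 - ε * Real.cos θ) with hcdef
  have hcc : ∀ θ, c θ = γbare * (1 - ε * Real.cos θ) := fun θ => rfl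
  have hcpos : ∀ θ, 0 < c θ := by
    intro θ
    rw [hcc]
    have h1 := Real.cos_le_one θ
    have h2 := Real.neg_one_le_cos θ
    apply mul_pos hγe
    nlinarith
  have hccont : Continuous c := by
    rw [hcdef]
    exact continuous_const.mul (continuous_const.sub (continuous_const.mul Real.continuous_cos))
  have hecdf' : ∀ a : ℝ, 0 ≤ a → (P {ω | γe ω ≤ a}).toReal =
      1 - (1 / π) * ∫ θ in (0:ℝ)..π, Real.exp (-a / c θ) := hecdf
  clear hecdf
  -- density integrand
  set K : ℝ → ℝ → ℝ := fun y θ => (1 / c θ) * Real.exp (-y / c θ) with hKdef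
  have hKcont : Continuous (Function.uncurry K) := by
    rw [hKdef]
    apply Continuous.mul
    · exact continuous_const.div (hccont.comp continuous_snd) fun p => (hcpos p.2).ne'
    · exact Real.continuous_exp.comp
        ((continuous_fst.neg).div (hccont.comp continuous_snd) fun p => (hcpos p.2).ne')
  have hKnonneg : ∀ y θ, 0 ≤ K y θ := fun y θ => by
    have h1 := (hcpos θ)
    rw [hKdef]
    positivity
  set ρ : ℝ → ℝ := fun y => (1 / π) * ∫ θ in (0:ℝ)..π, K y θ with hρdef
  have hρcont : Continuous ρ := by
    rw [hρdef]
    exact continuous_const.mul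
      (intervalIntegral.continuous_parametric_intervalIntegral_of_continuous' (μ := volume) hKcont 0 π)
  have hρnonneg : ∀ y, 0 ≤ ρ y := by
    intro y
    rw [hρdef]
    apply mul_nonneg (by positivity)
    exact intervalIntegral.integral_nonneg Real.pi_pos.le fun θ _ => hKnonneg y θ
  -- measures
  have hmbae : AEMeasurable γb P := hmb.aemeasurable
  have hmeae : AEMeasurable γe P := hme.aemeasurable
  set μb : Measure ℝ := P.map γb with hμb
  set μe : Measure ℝ := P.map γe with hμe
  haveI hprobb : IsProbabilityMeasure μb := Measure.isProbabilityMeasure_map hmbae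
  haveI hprobe : IsProbabilityMeasure μe := Measure.isProbabilityMeasure_map hmeae
  -- the event probability as an integral over μe
  have hmset : MeasurableSet {p : ℝ × ℝ | p.2 < p.1} :=
    measurableSet_lt measurable_snd measurable_fst
  have hmap : P.map (fun ω => (γb ω, γe ω)) = μb.prod μe :=
    (ProbabilityTheory.indepFun_iff_map_prod_eq_prod_map_map hmbae hmeae).mp hindep
  have hPS : P {ω | γe ω < γb ω} = ∫⁻ y, μb (Set.Ioi y) ∂μe := by
    have h1 : {ω | γe ω < γb ω} = (fun ω => (γb ω, γe ω)) ⁻¹' {p : ℝ × ℝ | p.2 < p.1} := rfl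
    rw [h1, ← Measure.map_apply (hmb.prodMk hme) hmset, hmap,
      Measure.prod_apply_symm hmset]
    exact lintegral_congr fun y => rfl
  -- exponential tail of μb
  have hIoi : ∀ y : ℝ, 0 ≤ y → μb (Set.Ioi y) = ENNReal.ofReal (Real.exp (-y / γbarb)) := by
    intro y hy
    have hIic : μb (Set.Iic y) = ENNReal.ofReal (1 - Real.exp (-y / γbarb)) := by
      have h1 : μb (Set.Iic y) = P {ω | γb ω ≤ y} := by
        rw [hμb, Measure.map_apply hmb measurableSet_Iic]; rfl
      rw [h1, ← hbcdf y hy, ENNReal.ofReal_toReal (measure_ne_top P _)]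
    have he1 : Real.exp (-y / γbarb) ≤ 1 :=
      Real.exp_le_one_iff.mpr (div_nonpos_of_nonpos_of_nonneg (by linarith) hγb.le)
    have hadd : (1:ℝ≥0∞) = ENNReal.ofReal (Real.exp (-y / γbarb))
        + ENNReal.ofReal (1 - Real.exp (-y / γbarb)) := by
      rw [← ENNReal.ofReal_add (Real.exp_pos _).le (by linarith)]
      norm_num
    rw [show Set.Ioi y = (Set.Iic y)ᶜ from Set.compl_Iic.symm,
      measure_compl measurableSet_Iic (measure_ne_top μb _), hIic, measure_univ]
    exact ENNReal.sub_eq_of_eq_add ENNReal.ofReal_ne_top hadd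
  have haee : ∀ᵐ y ∂μe, 0 ≤ y := by
    rw [hμe]
    exact (ae_map_iff hmeae (measurableSet_le measurable_const measurable_id)).mpr
      (ae_of_all _ hepos)
  have hstep1 : ∫⁻ y, μb (Set.Ioi y) ∂μe
      = ∫⁻ y, ENNReal.ofReal (Real.exp (-y / γbarb)) ∂μe := by
    apply lintegral_congr_ae
    filter_upwards [haee] with y hy
    exact hIoi y hy
  -- identify μe with a density
  set g : ℝ → ℝ≥0∞ := fun y => Set.indicator (Set.Ici 0) (fun y => ENNReal.ofReal (ρ y)) y
    with hgdef
  have hgm : Measurable g := ((hρcont.measurable).ennreal_ofReal).indicator measurableSet_Ici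
  set νe : Measure ℝ := volume.withDensity g with hνe
  have hcdf_density : ∀ x : ℝ, 0 ≤ x →
      ∫ y in Set.Ioc 0 x, ρ y = 1 - (1 / π) * ∫ θ in (0:ℝ)..π, Real.exp (-x / c θ) := by
    intro x hx
    have hKint : IntegrableOn (Function.uncurry K)
        ((Set.Icc 0 x) ×ˢ (Set.Icc 0 π)) (volume.prod volume) :=
      (hKcont.continuousOn).integrableOn_compact
        ((isCompact_Icc (a := (0:ℝ)) (b := x)).prod (isCompact_Icc (a := (0:ℝ)) (b := π)))
    have hKint2 : Integrable (Function.uncurry K)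
        ((volume.restrict (Set.Ioc 0 x)).prod (volume.restrict (Set.Ioc 0 π))) := by
      rw [Measure.prod_restrict]
      exact hKint.mono_set (Set.prod_mono Set.Ioc_subset_Icc_self Set.Ioc_subset_Icc_self)
    have hswap : ∫ y in Set.Ioc 0 x, ∫ θ in Set.Ioc 0 π, K y θ
        = ∫ θ in Set.Ioc 0 π, ∫ y in Set.Ioc 0 x, K y θ :=
      MeasureTheory.integral_integral_swap hKint2
    have hinner : ∀ θ : ℝ, ∫ y in Set.Ioc 0 x, K y θ = 1 - Real.exp (-x / c θ) := by
      intro θ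
      rw [← intervalIntegral.integral_of_le hx]
      exact exp_interval_integral (hcpos θ) x
    have hexpcont : Continuous (fun θ => Real.exp (-x / c θ)) :=
      Real.continuous_exp.comp (continuous_const.div hccont fun θ => (hcpos θ).ne')
    calc ∫ y in Set.Ioc 0 x, ρ y
        = ∫ y in Set.Ioc 0 x, (1 / π) * ∫ θ in Set.Ioc 0 π, K y θ := by
          apply setIntegral_congr_fun measurableSet_Ioc
          intro y _
          rw [hρdef]
          simp only
          rw [intervalIntegral.integral_of_le Real.pi_pos.le]
      _ = (1 / π) * ∫ y in Set.Ioc 0 x, ∫ θ in Set.Ioc 0 π, K y θ := by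
          rw [MeasureTheory.integral_const_mul]
      _ = (1 / π) * ∫ θ in Set.Ioc 0 π, ∫ y in Set.Ioc 0 x, K y θ := by rw [hswap]
      _ = (1 / π) * ∫ θ in Set.Ioc 0 π, (1 - Real.exp (-x / c θ)) := by
          congr 1
          exact setIntegral_congr_fun measurableSet_Ioc fun θ _ => hinner θ
      _ = 1 - (1 / π) * ∫ θ in (0:ℝ)..π, Real.exp (-x / c θ) := by
          rw [← intervalIntegral.integral_of_le Real.pi_pos.le,
            intervalIntegral.integral_sub (intervalIntegrable_const)
              (hexpcont.intervalIntegrable _ _)]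
          simp only [intervalIntegral.integral_const, smul_eq_mul, mul_one, sub_zero]
          field_simp
  have hIiceq : ∀ x : ℝ, μe (Set.Iic x) = νe (Set.Iic x) := by
    intro x
    rcases lt_or_ge x 0 with hx | hx
    · have h1 : μe (Set.Iic x) = 0 := by
        rw [hμe, Measure.map_apply hme measurableSet_Iic]
        have h2 : γe ⁻¹' (Set.Iic x) = ∅ := by
          ext ω
          simp only [Set.mem_preimage, Set.mem_Iic, Set.mem_empty_iff_false, iff_false, not_le]
          exact lt_of_lt_of_le hx (hepos ω)
        rw [h2, measure_empty]
      have h2 : νe (Set.Iic x) = 0 := by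
        rw [hνe, withDensity_apply _ measurableSet_Iic]
        have hz : ∀ᵐ y ∂volume, y ∈ Set.Iic x → g y = (fun _ => (0:ℝ≥0∞)) y := by
          refine ae_of_all _ fun y hy => ?_
          have hy' : y ∉ Set.Ici (0:ℝ) := by
            simp only [Set.mem_Ici, not_le]
            exact lt_of_le_of_lt hy hx
          exact Set.indicator_of_notMem hy' _
        rw [setLIntegral_congr_fun_ae measurableSet_Iic hz, lintegral_zero]
      rw [h1, h2]
    · have h1 : μe (Set.Iic x) = ENNReal.ofReal
          (1 - (1 / π) * ∫ θ in (0:ℝ)..π, Real.exp (-x / c θ)) := by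
        have h2 : μe (Set.Iic x) = P {ω | γe ω ≤ x} := by
          rw [hμe, Measure.map_apply hme measurableSet_Iic]; rfl
        rw [h2, ← hecdf' x hx, ENNReal.ofReal_toReal (measure_ne_top P _)]
      have h3 : νe (Set.Iic x) = ENNReal.ofReal (∫ y in Set.Ioc 0 x, ρ y) := by
        rw [hνe, withDensity_apply _ measurableSet_Iic, hgdef]
        rw [lintegral_indicator measurableSet_Ici,
          Measure.restrict_restrict measurableSet_Ici, Set.Ici_inter_Iic,
          ← Measure.restrict_congr_set Ioc_ae_eq_Icc]
        rw [← MeasureTheory.ofReal_integral_eq_lintegral_ofReal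
          ((hρcont.integrableOn_Icc).mono_set Set.Ioc_subset_Icc_self)
          (ae_of_all _ hρnonneg)]
      rw [h1, h3, hcdf_density x hx]
  have hμeeq : μe = νe := MeasureTheory.Measure.ext_of_Iic μe νe hIiceq
  -- main computation
  set L : ℝ → ℝ → ℝ := fun y θ => Real.exp (-y / γbarb) * K y θ with hLdef
  have hLcont : Continuous (Function.uncurry L) := by
    rw [hLdef]
    exact (Real.continuous_exp.comp ((continuous_fst.neg).div_const γbarb)).mul hKcont
  have hLnonneg : ∀ y θ, 0 ≤ L y θ := fun y θ =>
    mul_nonneg (Real.exp_pos _).le (hKnonneg y θ)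
  have hexpm : Measurable (fun y : ℝ => ENNReal.ofReal (Real.exp (-y / γbarb))) :=
    (Real.continuous_exp.comp ((continuous_id.neg).div_const γbarb)).measurable.ennreal_ofReal
  have hpt : ∀ y : ℝ, ENNReal.ofReal (ρ y) * ENNReal.ofReal (Real.exp (-y / γbarb))
      = ENNReal.ofReal (1 / π) * ∫⁻ θ in Set.Ioc 0 π, ENNReal.ofReal (L y θ) := by
    intro y
    have hLycont : Continuous (fun θ => L y θ) := by
      simp only [hLdef, hKdef]
      exact continuous_const.mul
        ((continuous_const.div hccont fun θ => (hcpos θ).ne').mul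
          (Real.continuous_exp.comp (continuous_const.div hccont fun θ => (hcpos θ).ne')))
    have hint : IntegrableOn (fun θ => L y θ) (Set.Ioc 0 π) :=
      (hLycont.integrableOn_Icc).mono_set Set.Ioc_subset_Icc_self
    have h1 : ∫ θ in Set.Ioc 0 π, L y θ
        = Real.exp (-y / γbarb) * ∫ θ in (0:ℝ)..π, K y θ := by
      rw [← intervalIntegral.integral_const_mul, ← intervalIntegral.integral_of_le Real.pi_pos.le]
    have h2 : ρ y * Real.exp (-y / γbarb) = (1 / π) * ∫ θ in Set.Ioc 0 π, L y θ := by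
      rw [h1, hρdef]
      ring
    rw [← ENNReal.ofReal_mul (hρnonneg y), h2,
      ENNReal.ofReal_mul (by positivity : (0:ℝ) ≤ 1 / π),
      MeasureTheory.ofReal_integral_eq_lintegral_ofReal hint (ae_of_all _ fun θ => hLnonneg y θ)]
  have hLm : AEMeasurable (Function.uncurry (fun y θ => ENNReal.ofReal (L y θ)))
      ((volume.restrict (Set.Ioi 0)).prod (volume.restrict (Set.Ioc 0 π))) := by
    exact (hLcont.measurable.ennreal_ofReal).aemeasurable
  have hinner2 : ∀ θ : ℝ, ∫⁻ y in Set.Ioi 0, ENNReal.ofReal (L y θ)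
      = ENNReal.ofReal (γbarb / (γbarb + c θ)) := by
    intro θ
    have hr : 0 < 1 / γbarb + 1 / c θ := by
      have := hcpos θ
      positivity
    have hL : ∀ y, L y θ = (1 / c θ) * Real.exp (-((1 / γbarb + 1 / c θ) * y)) := by
      intro y
      rw [hLdef, hKdef]
      simp only
      rw [mul_comm (Real.exp (-y / γbarb)), mul_assoc, ← Real.exp_add]
      congr 2
      field_simp
      ring
    have hint : IntegrableOn (fun y => (1 / c θ) * Real.exp (-((1 / γbarb + 1 / c θ) * y)))
        (Set.Ioi 0) := by
      have heqf : (fun y : ℝ => Real.exp (-((1 / γbarb + 1 / c θ) * y)))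
          = (fun y : ℝ => Real.exp (-(1 / γbarb + 1 / c θ) * y)) := by
        funext y; rw [neg_mul]
      have h2 : IntegrableOn (fun y => Real.exp (-((1 / γbarb + 1 / c θ) * y))) (Set.Ioi 0) := by
        rw [heqf]
        exact exp_neg_integrableOn_Ioi 0 hr
      exact h2.const_mul _
    calc ∫⁻ y in Set.Ioi 0, ENNReal.ofReal (L y θ)
        = ∫⁻ y in Set.Ioi 0, ENNReal.ofReal ((1 / c θ)
            * Real.exp (-((1 / γbarb + 1 / c θ) * y))) := by
          exact lintegral_congr fun y => by rw [hL y]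
      _ = ENNReal.ofReal (∫ y in Set.Ioi 0, (1 / c θ)
            * Real.exp (-((1 / γbarb + 1 / c θ) * y))) := by
          rw [← MeasureTheory.ofReal_integral_eq_lintegral_ofReal hint
            (ae_of_all _ fun y =>
              mul_nonneg (one_div_nonneg.mpr (hcpos θ).le) (Real.exp_pos _).le)]
      _ = ENNReal.ofReal (γbarb / (γbarb + c θ)) := by
          rw [MeasureTheory.integral_const_mul, exp_Ioi_integral hr]
          congr 1
          have h1 := hcpos θ
          have h2 : 0 < γbarb + c θ := by linarith
          rw [div_add_div _ _ hγb.ne' h1.ne', one_div_div]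
          field_simp
          exact add_comm γbarb (c θ)
  have hintθ : IntegrableOn (fun θ => γbarb / (γbarb + c θ)) (Set.Ioc 0 π) := by
    have hco : Continuous (fun θ => γbarb / (γbarb + c θ)) :=
      continuous_const.div (continuous_const.add hccont)
        (fun θ => by have := hcpos θ; positivity)
    exact (hco.integrableOn_Icc).mono_set Set.Ioc_subset_Icc_self
  have hkey : P {ω | γe ω < γb ω}
      = ENNReal.ofReal ((1 / π) * ∫ θ in (0:ℝ)..π, γbarb / (γbarb + c θ)) := by
    rw [hPS, hstep1, hμeeq, hνe,
      lintegral_withDensity_eq_lintegral_mul volume hgm hexpm]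
    have hind : ∀ y : ℝ, (g * fun y => ENNReal.ofReal (Real.exp (-y / γbarb))) y
        = Set.indicator (Set.Ici 0)
          (fun y => ENNReal.ofReal (ρ y) * ENNReal.ofReal (Real.exp (-y / γbarb))) y := by
      intro y
      by_cases hy : y ∈ Set.Ici 0 <;> simp [hgdef, hy]
    rw [lintegral_congr hind, lintegral_indicator measurableSet_Ici,
      ← Measure.restrict_congr_set Ioi_ae_eq_Ici]
    rw [lintegral_congr hpt, lintegral_const_mul' _ _ ENNReal.ofReal_ne_top,
      lintegral_lintegral_swap hLm]
    rw [lintegral_congr hinner2]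
    rw [← MeasureTheory.ofReal_integral_eq_lintegral_ofReal hintθ
      (ae_of_all _ fun θ => by have := hcpos θ; positivity),
      ← ENNReal.ofReal_mul (by positivity : (0:ℝ) ≤ 1 / π)]
    congr 1
    rw [intervalIntegral.integral_of_le Real.pi_pos.le]
  -- finish
  rw [hkey, ENNReal.toReal_ofReal (by
    apply mul_nonneg (by positivity)
    exact intervalIntegral.integral_nonneg Real.pi_pos.le
      fun θ _ => by have := hcpos θ; positivity)]
  set A : ℝ := ε * γbare / (γbarb + γbare) with hAdef
  have hA0 : 0 ≤ A := by
    rw [hAdef]; positivity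
  have hA1 : A < 1 := by
    rw [hAdef, div_lt_one hsum]; nlinarith
  have hptw : ∀ θ ∈ Set.uIcc (0:ℝ) π, γbarb / (γbarb + c θ)
      = (γbarb / (γbarb + γbare)) * (1 / (1 - A * Real.cos θ)) := by
    intro θ _
    have hAden : 0 < 1 - A * Real.cos θ := by
      nlinarith [Real.cos_le_one θ, Real.neg_one_le_cos θ]
    have hexp : γbarb + c θ = (γbarb + γbare) * (1 - A * Real.cos θ) := by
      rw [hcc, hAdef]
      field_simp
      ring
    rw [hexp]
    field_simp
  rw [intervalIntegral.integral_congr hptw, intervalIntegral.integral_const_mul,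
    integral_one_div_one_sub_cos hA0 hA1]
  rw [eq_comm]
  have hπ : (π:ℝ) ≠ 0 := Real.pi_ne_zero
  field_simp

end helpers

theorem positive_secrecy_hoyt_eve
    {Ω : Type*} [MeasurableSpace Ω] (P : Measure Ω) [IsProbabilityMeasure P]
    (γb γe : Ω → ℝ) (hmb : Measurable γb) (hme : Measurable γe)
    (hindep : IndepFun γb γe P)
    (γbarb γbare qe : ℝ) (hγb : 0 < γbarb) (hγe : 0 < γbare)
    (hqe0 : 0 < qe) (hqe1 : qe ≤ 1)
    (hbpos : ∀ ω, 0 ≤ γb ω) (hepos : ∀ ω, 0 ≤ γe ω)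
    (hbcdf : ∀ a : ℝ, 0 ≤ a → (P {ω | γb ω ≤ a}).toReal = 1 - Real.exp (-a / γbarb))
    (hecdf : ∀ a : ℝ, 0 ≤ a → (P {ω | γe ω ≤ a}).toReal =
      1 - (1 / π) * ∫ θ in (0:ℝ)..π,
        Real.exp (-a / (γbare * (1 - (1 - qe ^ 2) / (1 + qe ^ 2) * Real.cos θ)))) :
    (P {ω | γe ω < γb ω}).toReal =
      (γbarb / (γbarb + γbare)) *
        (1 / Real.sqrt (1 -
          ((1 - qe ^ 2) / (1 + qe ^ 2) * γbare / (γbarb + γbare)) ^ 2)) ∧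
    StrictAntiOn (fun q : ℝ => (γbarb / (γbarb + γbare)) *
        (1 / Real.sqrt (1 -
          ((1 - q ^ 2) / (1 + q ^ 2) * γbare / (γbarb + γbare)) ^ 2)))
      (Set.Ioc 0 1) := by
    exact ⟨positive_secrecy_hoyt_eve_main P γb γe hmb hme hindep γbarb γbare qe hγb hγe
      hqe0 hqe1 hbpos hepos hbcdf hecdf,
    anti_part hγb hγe⟩
end

section
/- Let X be squared-Hoyt distributed with mean γ̄ and parameter q ∈ (0,1], and let Y ≥ 0 be an independent nonnegative random variable with moment generating function φ_Y(s) = E[e^{sY}], finite for s ≤ 0. Then for γₒ > 0, P(X < γₒ·(Y+1)) = 1 - (1/π)·∫₀^π e^{-γₒ/γ(θ,q)}·φ_Y(-γₒ/γ(θ,q)) dθ, where γ(θ,q) = γ̄·(1 - ((1-q²)/(1+q²))·cosθ). -/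
open Real MeasureTheory ProbabilityTheory intervalIntegral

lemma aux_gpos {γbar q : ℝ} (hγ : 0 < γbar) (hq0 : 0 < q) (hq1 : q ≤ 1) (θ : ℝ) :
    0 < γbar * (1 - (1 - q ^ 2) / (1 + q ^ 2) * Real.cos θ) := by
  have hd : (0:ℝ) < 1 + q ^ 2 := by positivity
  have hc0 : 0 ≤ (1 - q ^ 2) / (1 + q ^ 2) := div_nonneg (by nlinarith) hd.le
  have hc1 : (1 - q ^ 2) / (1 + q ^ 2) < 1 := by
    rw [div_lt_one hd]; nlinarith
  have h1 : (1 - q ^ 2) / (1 + q ^ 2) * Real.cos θ ≤ (1 - q ^ 2) / (1 + q ^ 2) :=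
    mul_le_of_le_one_right hc0 (Real.cos_le_one θ)
  apply mul_pos hγ; linarith

lemma aux_cont {γbar q : ℝ} (hγ : 0 < γbar) (hq0 : 0 < q) (hq1 : q ≤ 1) :
    Continuous fun a : ℝ => ∫ θ in (0:ℝ)..π,
      Real.exp (-a / (γbar * (1 - (1 - q ^ 2) / (1 + q ^ 2) * Real.cos θ))) := by
  apply intervalIntegral.continuous_parametric_intervalIntegral_of_continuous'
  apply Real.continuous_exp.comp
  apply Continuous.div
  · fun_prop
  · fun_prop
  · exact fun p => (aux_gpos hγ hq0 hq1 p.2).ne'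

lemma aux_Iio (μ : Measure ℝ) (F : ℝ → ℝ) (hF : Continuous F)
    (h : ∀ a : ℝ, 0 ≤ a → μ (Set.Iic a) = ENNReal.ofReal (F a)) {a : ℝ} (ha : 0 < a) :
    μ (Set.Iio a) = ENNReal.ofReal (F a) := by
  have hle : ∀ {m n : ℕ}, m ≤ n → a - 1/((m:ℝ)+1) ≤ a - 1/((n:ℝ)+1) := by
    intro m n hmn
    have : 1/((n:ℝ)+1) ≤ 1/((m:ℝ)+1) :=
      one_div_le_one_div_of_le (by positivity) (by have : (m:ℝ) ≤ n := Nat.cast_le.mpr hmn; linarith)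
    linarith
  have hmono : Monotone (fun n : ℕ => Set.Iic (a - 1/((n:ℝ)+1))) :=
    fun m n hmn => Set.Iic_subset_Iic.mpr (hle hmn)
  have hU : ⋃ n : ℕ, Set.Iic (a - 1/((n:ℝ)+1)) = Set.Iio a := by
    ext x
    simp only [Set.mem_iUnion, Set.mem_Iic, Set.mem_Iio]
    constructor
    · rintro ⟨n, hx⟩
      have : (0:ℝ) < 1/((n:ℝ)+1) := by positivity
      linarith
    · intro hx
      obtain ⟨n, hn⟩ := exists_nat_one_div_lt (sub_pos.mpr hx)
      exact ⟨n, by linarith⟩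
  have h1 := tendsto_measure_iUnion_atTop (μ := μ) hmono
  rw [hU] at h1
  have hx : Filter.Tendsto (fun n : ℕ => a - 1/((n:ℝ)+1)) Filter.atTop (nhds a) := by
    have := tendsto_one_div_add_atTop_nhds_zero_nat (𝕜 := ℝ)
    simpa using Filter.Tendsto.sub (tendsto_const_nhds (x := a)) this
  have h2 : Filter.Tendsto (fun n : ℕ => μ (Set.Iic (a - 1/((n:ℝ)+1)))) Filter.atTop
      (nhds (ENNReal.ofReal (F a))) := by
    have h3 : Filter.Tendsto (fun n : ℕ => ENNReal.ofReal (F (a - 1/((n:ℝ)+1)))) Filter.atTop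
        (nhds (ENNReal.ofReal (F a))) :=
      (ENNReal.continuous_ofReal.comp hF).continuousAt.tendsto.comp hx
    apply h3.congr'
    obtain ⟨N, hN⟩ := exists_nat_one_div_lt ha
    filter_upwards [Filter.eventually_ge_atTop N] with n hn
    have h0 : 0 ≤ a - 1/((n:ℝ)+1) := by have := hle hn; linarith
    exact (h _ h0).symm
  exact tendsto_nhds_unique h1 h2

theorem outage_interference_noise
    {Ω : Type*} [MeasurableSpace Ω] (P : Measure Ω) [IsProbabilityMeasure P]
    (X Y : Ω → ℝ) (hmX : Measurable X) (hmY : Measurable Y)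
    (hindep : IndepFun X Y P)
    (γbar q γo : ℝ) (hγ : 0 < γbar) (hq0 : 0 < q) (hq1 : q ≤ 1) (ho : 0 < γo)
    (hXpos : ∀ ω, 0 ≤ X ω) (hYpos : ∀ ω, 0 ≤ Y ω)
    (hXcdf : ∀ a : ℝ, 0 ≤ a → (P {ω | X ω ≤ a}).toReal =
      1 - (1 / π) * ∫ θ in (0:ℝ)..π,
        Real.exp (-a / (γbar * (1 - (1 - q ^ 2) / (1 + q ^ 2) * Real.cos θ))))
    (hmgf : ∀ s : ℝ, s ≤ 0 → Integrable (fun ω => Real.exp (s * Y ω)) P) :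
    (P {ω | X ω < γo * (Y ω + 1)}).toReal =
      1 - (1 / π) * ∫ θ in (0:ℝ)..π,
        Real.exp (-γo / (γbar * (1 - (1 - q ^ 2) / (1 + q ^ 2) * Real.cos θ))) *
          mgf Y P (-γo / (γbar * (1 - (1 - q ^ 2) / (1 + q ^ 2) * Real.cos θ))) := by
  have hgpos : ∀ θ : ℝ, 0 < γbar * (1 - (1 - q ^ 2) / (1 + q ^ 2) * Real.cos θ) :=
    aux_gpos hγ hq0 hq1
  set g : ℝ → ℝ := fun θ => γbar * (1 - (1 - q ^ 2) / (1 + q ^ 2) * Real.cos θ) with hg_def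
  set G : ℝ → ℝ := fun a => ∫ θ in (0:ℝ)..π, Real.exp (-a / g θ) with hG_def
  set F : ℝ → ℝ := fun a => 1 - (1 / π) * G a with hF_def
  have hGcont : Continuous G := aux_cont hγ hq0 hq1
  have hFcont : Continuous F := continuous_const.sub (continuous_const.mul hGcont)
  haveI : IsProbabilityMeasure (P.map Y) := Measure.isProbabilityMeasure_map hmY.aemeasurable
  have hcdf' : ∀ a : ℝ, 0 ≤ a → (P.map X) (Set.Iic a) = ENNReal.ofReal (F a) := by
    intro a ha
    rw [Measure.map_apply hmX measurableSet_Iic]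
    have h : (P {ω | X ω ≤ a}).toReal = F a := hXcdf a ha
    have h2 : X ⁻¹' Set.Iic a = {ω | X ω ≤ a} := rfl
    rw [h2, ← h, ENNReal.ofReal_toReal (measure_ne_top _ _)]
  have hIio : ∀ a : ℝ, 0 < a → (P.map X) (Set.Iio a) = ENNReal.ofReal (F a) :=
    fun a ha => aux_Iio _ F hFcont hcdf' ha
  have hF01 : ∀ a : ℝ, 0 ≤ a → 0 ≤ F a ∧ F a ≤ 1 := by
    intro a ha
    have h : (P {ω | X ω ≤ a}).toReal = F a := hXcdf a ha
    constructor
    · rw [← h]; exact ENNReal.toReal_nonneg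
    · rw [← h]
      calc (P {ω | X ω ≤ a}).toReal ≤ ENNReal.toReal 1 :=
            ENNReal.toReal_mono ENNReal.one_ne_top prob_le_one
        _ = 1 := by simp
  -- Step B : independence
  have hmap : P.map (fun ω => (Y ω, X ω)) = (P.map Y).prod (P.map X) :=
    (indepFun_iff_map_prod_eq_prod_map_map hmY.aemeasurable hmX.aemeasurable).mp hindep.symm
  have hS : MeasurableSet {p : ℝ × ℝ | p.2 < γo * (p.1 + 1)} :=
    measurableSet_lt (by fun_prop) (by fun_prop)
  have key1 : P {ω | X ω < γo * (Y ω + 1)}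
      = ∫⁻ y, (P.map X) (Set.Iio (γo * (y + 1))) ∂(P.map Y) := by
    have h0 : {ω | X ω < γo * (Y ω + 1)}
        = (fun ω => (Y ω, X ω)) ⁻¹' {p : ℝ × ℝ | p.2 < γo * (p.1 + 1)} := rfl
    rw [h0, ← Measure.map_apply (hmY.prodMk hmX) hS, hmap, Measure.prod_apply hS]
    rfl
  have haeY : ∀ᵐ y ∂(P.map Y), 0 ≤ y := by
    have : ∀ᵐ y ∂(P.map Y), y ∈ Set.Ici (0:ℝ) :=
      (ae_map_iff hmY.aemeasurable measurableSet_Ici).mpr (Filter.Eventually.of_forall hYpos)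
    filter_upwards [this] with y hy using hy
  have key2 : ∫⁻ y, (P.map X) (Set.Iio (γo * (y + 1))) ∂(P.map Y)
      = ∫⁻ y, ENNReal.ofReal (F (γo * (y + 1))) ∂(P.map Y) := by
    apply lintegral_congr_ae
    filter_upwards [haeY] with y hy
    exact hIio _ (by nlinarith)
  have hmeasF : AEStronglyMeasurable (fun y => F (γo * (y + 1))) (P.map Y) :=
    (hFcont.comp (by continuity : Continuous fun y : ℝ => γo * (y + 1))).aestronglyMeasurable
  have hintF : Integrable (fun y => F (γo * (y + 1))) (P.map Y) := by
    apply Integrable.mono' (integrable_const 1) hmeasF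
    filter_upwards [haeY] with y hy
    have h01 := hF01 (γo * (y + 1)) (by nlinarith)
    rw [Real.norm_eq_abs, abs_of_nonneg h01.1]; exact h01.2
  have hFnn : 0 ≤ᵐ[P.map Y] fun y => F (γo * (y + 1)) := by
    filter_upwards [haeY] with y hy
    exact (hF01 _ (by nlinarith)).1
  have key3 : ∫⁻ y, ENNReal.ofReal (F (γo * (y + 1))) ∂(P.map Y)
      = ENNReal.ofReal (∫ y, F (γo * (y + 1)) ∂(P.map Y)) :=
    (ofReal_integral_eq_lintegral_ofReal hintF hFnn).symm
  have key4 : (P {ω | X ω < γo * (Y ω + 1)}).toReal = ∫ y, F (γo * (y + 1)) ∂(P.map Y) := by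
    rw [key1, key2, key3, ENNReal.toReal_ofReal (integral_nonneg_of_ae hFnn)]
  have key5 : ∫ y, F (γo * (y + 1)) ∂(P.map Y) = ∫ ω, F (γo * (Y ω + 1)) ∂P :=
    integral_map hmY.aemeasurable hmeasF
  -- Step C : split F
  have hGbound : ∀ ω, ‖G (γo * (Y ω + 1))‖ ≤ π := by
    intro ω
    have ha : 0 < γo * (Y ω + 1) := by nlinarith [hYpos ω]
    have hexp : ∀ θ : ℝ, Real.exp (-(γo * (Y ω + 1)) / g θ) ≤ 1 := by
      intro θ
      have h1 : -(γo * (Y ω + 1)) / g θ ≤ 0 :=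
        div_nonpos_iff.mpr (Or.inr ⟨by linarith, (hgpos θ).le⟩)
      exact (Real.exp_le_exp.mpr h1).trans_eq Real.exp_zero
    have h0 : 0 ≤ G (γo * (Y ω + 1)) :=
      intervalIntegral.integral_nonneg Real.pi_pos.le (fun θ _ => (Real.exp_nonneg _))
    have hi1 : IntervalIntegrable (fun θ => Real.exp (-(γo * (Y ω + 1)) / g θ)) volume 0 π := by
      apply Continuous.intervalIntegrable
      apply Real.continuous_exp.comp
      exact Continuous.div continuous_const (by fun_prop) (fun θ => (hgpos θ).ne')
    have h1 : G (γo * (Y ω + 1)) ≤ π := by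
      calc G (γo * (Y ω + 1)) ≤ ∫ _ in (0:ℝ)..π, (1:ℝ) :=
            intervalIntegral.integral_mono_on Real.pi_pos.le hi1 intervalIntegrable_const
              (fun θ _ => hexp θ)
        _ = π := by simp
    rw [Real.norm_eq_abs, abs_of_nonneg h0]; exact h1
  have hGmeas : Measurable fun ω => G (γo * (Y ω + 1)) :=
    hGcont.measurable.comp (by fun_prop)
  have hintG : Integrable (fun ω => G (γo * (Y ω + 1))) P :=
    Integrable.mono' (integrable_const π) hGmeas.aestronglyMeasurable
      (Filter.Eventually.of_forall hGbound)
  have key6 : ∫ ω, F (γo * (Y ω + 1)) ∂P = 1 - (1 / π) * ∫ ω, G (γo * (Y ω + 1)) ∂P := by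
    show ∫ ω, (1 - (1 / π) * G (γo * (Y ω + 1))) ∂P = _
    rw [integral_sub (integrable_const 1) (hintG.const_mul _),
      MeasureTheory.integral_const, MeasureTheory.integral_const_mul]
    simp
  -- Step D : Fubini
  haveI hfin : IsFiniteMeasure (volume.restrict (Set.Ioc (0:ℝ) π)) :=
    ⟨by rw [Measure.restrict_apply_univ]; exact measure_Ioc_lt_top⟩
  have hfmeas : Measurable fun p : Ω × ℝ => Real.exp (-(γo * (Y p.1 + 1)) / g p.2) := by
    apply Real.measurable_exp.comp
    apply Measurable.div
    · fun_prop
    · fun_prop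
  have hfInt : Integrable (Function.uncurry fun ω θ => Real.exp (-(γo * (Y ω + 1)) / g θ))
      (P.prod (volume.restrict (Set.Ioc (0:ℝ) π))) := by
    apply Integrable.mono' (integrable_const 1) hfmeas.aestronglyMeasurable
    apply Filter.Eventually.of_forall
    rintro ⟨ω, θ⟩
    have ha : 0 < γo * (Y ω + 1) := by nlinarith [hYpos ω]
    have h1 : -(γo * (Y ω + 1)) / g θ ≤ 0 :=
      div_nonpos_iff.mpr (Or.inr ⟨by linarith, (hgpos θ).le⟩)
    rw [Real.norm_eq_abs, abs_of_nonneg (Real.exp_nonneg _)]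
    exact (Real.exp_le_exp.mpr h1).trans_eq Real.exp_zero
  have key7 : ∫ ω, G (γo * (Y ω + 1)) ∂P
      = ∫ θ in Set.Ioc (0:ℝ) π, (∫ ω, Real.exp (-(γo * (Y ω + 1)) / g θ) ∂P) := by
    have h0 : ∀ ω : Ω, G (γo * (Y ω + 1))
        = ∫ θ in Set.Ioc (0:ℝ) π, Real.exp (-(γo * (Y ω + 1)) / g θ) := by
      intro ω
      exact intervalIntegral.integral_of_le Real.pi_pos.le
    simp_rw [h0]
    exact integral_integral_swap hfInt
  -- Step E : inner integral is exp * mgf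
  have key8 : ∀ θ : ℝ, ∫ ω, Real.exp (-(γo * (Y ω + 1)) / g θ) ∂P
      = Real.exp (-γo / g θ) * mgf Y P (-γo / g θ) := by
    intro θ
    have hrw : ∀ ω, Real.exp (-(γo * (Y ω + 1)) / g θ)
        = Real.exp (-γo / g θ) * Real.exp ((-γo / g θ) * Y ω) := by
      intro ω
      rw [← Real.exp_add]
      congr 1
      have hg : g θ ≠ 0 := (hgpos θ).ne'
      field_simp
      ring
    simp_rw [hrw, MeasureTheory.integral_const_mul]
    rfl
  -- Combine
  rw [key4, key5, key6, key7]
  simp_rw [key8]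
  rw [← intervalIntegral.integral_of_le Real.pi_pos.le]
end

section
/- Let X be squared-Hoyt distributed with mean γ̄ and parameter q ∈ (0,1], and Y ≥ 0 independent with MGF φ_Y. Then P(X < γₒ·Y) = 1 - (1/π)·∫₀^π φ_Y(-γₒ/γ(θ,q)) dθ for γₒ > 0, where γ(θ,q) = γ̄·(1 - ((1-q²)/(1+q²))·cosθ). -/
open Real MeasureTheory ProbabilityTheory intervalIntegral

theorem outage_interference_limited
    {Ω : Type*} [MeasurableSpace Ω] (P : Measure Ω) [IsProbabilityMeasure P]
    (X Y : Ω → ℝ) (hmX : Measurable X) (hmY : Measurable Y)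
    (hindep : IndepFun X Y P)
    (γbar q γo : ℝ) (hγ : 0 < γbar) (hq0 : 0 < q) (hq1 : q ≤ 1) (ho : 0 < γo)
    (hXpos : ∀ ω, 0 ≤ X ω) (hYpos : ∀ ω, 0 ≤ Y ω)
    (hXcdf : ∀ a : ℝ, 0 ≤ a → (P {ω | X ω ≤ a}).toReal =
      1 - (1 / π) * ∫ θ in (0:ℝ)..π,
        Real.exp (-a / (γbar * (1 - (1 - q ^ 2) / (1 + q ^ 2) * Real.cos θ))))
    (hmgf : ∀ s : ℝ, s ≤ 0 → Integrable (fun ω => Real.exp (s * Y ω)) P) :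
    (P {ω | X ω < γo * Y ω}).toReal =
      1 - (1 / π) * ∫ θ in (0:ℝ)..π,
        mgf Y P (-γo / (γbar * (1 - (1 - q ^ 2) / (1 + q ^ 2) * Real.cos θ))) := by
  have hπ : (0:ℝ) < π := Real.pi_pos
  set c : ℝ := (1 - q ^ 2) / (1 + q ^ 2) with hc
  have hc0 : 0 ≤ c := by
    rw [hc]
    apply div_nonneg
    · nlinarith
    · positivity
  have hc1 : c < 1 := by
    rw [hc, div_lt_one (by positivity)]
    nlinarith
  have hgpos : ∀ θ : ℝ, 0 < γbar * (1 - c * Real.cos θ) := by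
    intro θ
    have h1 : c * Real.cos θ ≤ c := by nlinarith [Real.cos_le_one θ]
    exact mul_pos hγ (by linarith)
  set F : ℝ → ℝ := fun a =>
    1 - (1 / π) * ∫ θ in (0:ℝ)..π, Real.exp (-a / (γbar * (1 - c * Real.cos θ)))
    with hFdef
  have hcdf' : ∀ a : ℝ, 0 ≤ a → (P {ω | X ω ≤ a}).toReal = F a := by
    intro a ha
    simp only [hFdef]
    exact hXcdf a ha
  -- continuity of F
  have hucont : Continuous (Function.uncurry fun (a θ : ℝ) =>
      Real.exp (-a / (γbar * (1 - c * Real.cos θ)))) := by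
    apply Real.continuous_exp.comp
    apply Continuous.div
    · exact continuous_fst.neg
    · exact continuous_const.mul (continuous_const.sub
        (continuous_const.mul (Real.continuous_cos.comp continuous_snd)))
    · intro p; exact (hgpos p.2).ne'
  have hFcont : Continuous F := by
    rw [hFdef]
    exact continuous_const.sub (continuous_const.mul
      (intervalIntegral.continuous_parametric_intervalIntegral_of_continuous' hucont 0 π))
  have hF0 : F 0 = 0 := by
    simp only [hFdef, neg_zero, zero_div, Real.exp_zero, intervalIntegral.integral_const,
      smul_eq_mul, mul_one, sub_zero]
    field_simp
    norm_num
  -- strict inequality CDF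
  have hlt : ∀ a : ℝ, 0 ≤ a → (P {ω | X ω < a}).toReal = F a := by
    intro a ha
    rcases eq_or_lt_of_le ha with rfl | ha
    · have he : {ω | X ω < 0} = ∅ := by
        ext ω; simp [not_lt.2 (hXpos ω)]
      simp [he, hF0]
    · have hseq : ∀ n : ℕ, 0 ≤ a - a / (n + 1) := by
        intro n
        have h1 : a / ((n : ℝ) + 1) ≤ a := by
          apply div_le_self ha.le
          have : (0:ℝ) ≤ (n:ℝ) := Nat.cast_nonneg n
          linarith
        linarith
      have hmono : Monotone (fun n : ℕ => {ω | X ω ≤ a - a / (n + 1)}) := by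
        intro n m hnm ω (hω : X ω ≤ _)
        have h1 : a / ((m : ℝ) + 1) ≤ a / ((n : ℝ) + 1) := by
          apply div_le_div_of_nonneg_left ha.le
          · have : (0:ℝ) ≤ (n:ℝ) := Nat.cast_nonneg n
            linarith
          · exact_mod_cast Nat.succ_le_succ hnm
        show X ω ≤ _
        linarith
      have hunion : (⋃ n : ℕ, {ω | X ω ≤ a - a / (n + 1)}) = {ω | X ω < a} := by
        ext ω
        simp only [Set.mem_iUnion, Set.mem_setOf_eq]
        constructor
        · rintro ⟨n, hn⟩
          have : 0 < a / ((n:ℝ) + 1) := by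
            apply div_pos ha
            have : (0:ℝ) ≤ (n:ℝ) := Nat.cast_nonneg n
            linarith
          linarith
        · intro hω
          obtain ⟨n, hn⟩ := exists_nat_gt (a / (a - X ω))
          refine ⟨n, ?_⟩
          have hε : 0 < a - X ω := by linarith
          have hn1 : a / (a - X ω) < (n:ℝ) + 1 := by
            have : (0:ℝ) ≤ (n:ℝ) := Nat.cast_nonneg n
            linarith
          have : a / ((n:ℝ) + 1) < a - X ω := by
            rw [div_lt_iff₀ (by positivity)]
            rw [div_lt_iff₀ hε] at hn1
            linarith
          linarith
      have htend1 : Filter.Tendsto (fun n : ℕ => P {ω | X ω ≤ a - a / (n + 1)})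
          Filter.atTop (nhds (P {ω | X ω < a})) := by
        rw [← hunion]
        exact tendsto_measure_iUnion_atTop hmono
      have htend1' : Filter.Tendsto (fun n : ℕ => (P {ω | X ω ≤ a - a / (n + 1)}).toReal)
          Filter.atTop (nhds ((P {ω | X ω < a}).toReal)) :=
        (ENNReal.tendsto_toReal (measure_ne_top P _)).comp htend1
      have harg : Filter.Tendsto (fun n : ℕ => a - a / ((n:ℝ) + 1))
          Filter.atTop (nhds a) := by
        have h0 : Filter.Tendsto (fun n : ℕ => a / ((n:ℝ) + 1)) Filter.atTop (nhds 0) := by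
          have := (tendsto_one_div_add_atTop_nhds_zero_nat).const_mul a
          simpa [div_eq_mul_inv] using this
        have := Filter.Tendsto.sub (tendsto_const_nhds (x := a)) h0
        simpa using this
      have htend2 : Filter.Tendsto (fun n : ℕ => (P {ω | X ω ≤ a - a / (n + 1)}).toReal)
          Filter.atTop (nhds (F a)) := by
        have : Filter.Tendsto (fun n : ℕ => F (a - a / ((n:ℝ) + 1)))
            Filter.atTop (nhds (F a)) := (hFcont.tendsto a).comp harg
        refine this.congr fun n => ?_
        exact (hcdf' _ (hseq n)).symm
      exact tendsto_nhds_unique htend1' htend2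
  -- independence: reduce to integral over law of Y
  haveI hprY : IsProbabilityMeasure (P.map Y) := Measure.isProbabilityMeasure_map hmY.aemeasurable
  haveI hprX : IsProbabilityMeasure (P.map X) := Measure.isProbabilityMeasure_map hmX.aemeasurable
  have hs : MeasurableSet {p : ℝ × ℝ | p.1 < γo * p.2} :=
    measurableSet_lt measurable_fst (measurable_const.mul measurable_snd)
  have hmap : P.map (fun ω => (X ω, Y ω)) = (P.map X).prod (P.map Y) :=
    (indepFun_iff_map_prod_eq_prod_map_map hmX.aemeasurable hmY.aemeasurable).mp hindep
  have h1 : P {ω | X ω < γo * Y ω} = ∫⁻ y, P {ω | X ω < γo * y} ∂(P.map Y) := by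
    have e1 : P {ω | X ω < γo * Y ω}
        = P.map (fun ω => (X ω, Y ω)) {p : ℝ × ℝ | p.1 < γo * p.2} := by
      rw [Measure.map_apply (hmX.prodMk hmY) hs]
      rfl
    rw [e1, hmap, Measure.prod_apply_symm hs]
    refine lintegral_congr fun y => ?_
    have e2 : (fun x => (x, y)) ⁻¹' {p : ℝ × ℝ | p.1 < γo * p.2} = Set.Iio (γo * y) := rfl
    rw [e2, Measure.map_apply hmX measurableSet_Iio]
    rfl
  have hYae : ∀ᵐ y ∂(P.map Y), 0 ≤ y :=
    (MeasureTheory.ae_map_iff hmY.aemeasurable measurableSet_Ici).2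
      (Filter.Eventually.of_forall hYpos)
  have h2 : ∫⁻ y, P {ω | X ω < γo * y} ∂(P.map Y)
      = ∫⁻ y, ENNReal.ofReal (F (γo * y)) ∂(P.map Y) := by
    refine lintegral_congr_ae (hYae.mono fun y hy => ?_)
    show P {ω | X ω < γo * y} = ENNReal.ofReal (F (γo * y))
    rw [← hlt (γo * y) (by positivity)]
    exact (ENNReal.ofReal_toReal (measure_ne_top P _)).symm
  have hFmeas : AEStronglyMeasurable (fun y => F (γo * y)) (P.map Y) :=
    (hFcont.comp (continuous_const.mul continuous_id)).aestronglyMeasurable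
  have hFnn : 0 ≤ᵐ[P.map Y] fun y => F (γo * y) := hYae.mono fun y hy => by
    show (0:ℝ) ≤ F (γo * y)
    rw [← hlt (γo * y) (by positivity)]
    exact ENNReal.toReal_nonneg
  have h3 : (∫⁻ y, ENNReal.ofReal (F (γo * y)) ∂(P.map Y)).toReal
      = ∫ y, F (γo * y) ∂(P.map Y) :=
    (integral_eq_lintegral_of_nonneg_ae hFnn hFmeas).symm
  -- Fubini
  haveI hfin : IsFiniteMeasure (volume.restrict (Set.Ioc (0:ℝ) π)) := by
    constructor
    rw [Measure.restrict_apply_univ, Real.volume_Ioc]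
    exact ENNReal.ofReal_lt_top
  have hucont2 : Continuous (Function.uncurry fun (y θ : ℝ) =>
      Real.exp (-(γo * y) / (γbar * (1 - c * Real.cos θ)))) := by
    apply Real.continuous_exp.comp
    apply Continuous.div
    · exact (continuous_const.mul continuous_fst).neg
    · exact continuous_const.mul (continuous_const.sub
        (continuous_const.mul (Real.continuous_cos.comp continuous_snd)))
    · intro p; exact (hgpos p.2).ne'
  have hprod_ae : ∀ᵐ (p : ℝ × ℝ) ∂((P.map Y).prod (volume.restrict (Set.Ioc (0:ℝ) π))),
      0 ≤ p.1 := by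
    rw [Filter.eventually_iff, mem_ae_iff]
    have h0 : (P.map Y) {y : ℝ | ¬ 0 ≤ y} = 0 := by
      rw [Filter.eventually_iff, mem_ae_iff] at hYae
      exact hYae
    refine measure_mono_null (fun p hp => ?_) (?_ : ((P.map Y).prod
      (volume.restrict (Set.Ioc (0:ℝ) π))) ({y : ℝ | ¬ 0 ≤ y} ×ˢ Set.univ) = 0)
    · exact ⟨hp, trivial⟩
    · rw [Measure.prod_prod, h0, zero_mul]
  have hintg : Integrable (Function.uncurry fun (y θ : ℝ) =>
      Real.exp (-(γo * y) / (γbar * (1 - c * Real.cos θ))))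
      ((P.map Y).prod (volume.restrict (Set.Ioc (0:ℝ) π))) := by
    refine Integrable.mono' (integrable_const 1) hucont2.aestronglyMeasurable
      (hprod_ae.mono fun p hp => ?_)
    rw [Function.uncurry, Real.norm_eq_abs, Real.abs_exp]
    rw [Real.exp_le_one_iff]
    apply div_nonpos_of_nonpos_of_nonneg
    · simp only [neg_nonpos]
      positivity
    · exact (hgpos p.2).le
  have hswap : ∫ y, (∫ θ in (0:ℝ)..π,
        Real.exp (-(γo * y) / (γbar * (1 - c * Real.cos θ)))) ∂(P.map Y)
      = ∫ θ in (0:ℝ)..π, ∫ y,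
        Real.exp (-(γo * y) / (γbar * (1 - c * Real.cos θ))) ∂(P.map Y) := by
    simp_rw [intervalIntegral.integral_of_le hπ.le]
    exact integral_integral_swap hintg
  have hinner : ∀ θ : ℝ, (∫ y, Real.exp (-(γo * y) / (γbar * (1 - c * Real.cos θ))) ∂(P.map Y))
      = mgf Y P (-γo / (γbar * (1 - c * Real.cos θ))) := by
    intro θ
    rw [integral_map hmY.aemeasurable (Continuous.aestronglyMeasurable (by
      apply Real.continuous_exp.comp
      apply Continuous.div
      · exact (continuous_const.mul continuous_id).neg
      · exact continuous_const
      · intro x; exact (hgpos θ).ne'))]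
    simp only [ProbabilityTheory.mgf]
    congr 1
    funext ω
    congr 1
    ring
  have hIint : Integrable (fun y => ∫ θ in (0:ℝ)..π,
      Real.exp (-(γo * y) / (γbar * (1 - c * Real.cos θ)))) (P.map Y) := by
    simp_rw [intervalIntegral.integral_of_le hπ.le]
    exact hintg.integral_prod_left
  have h4 : ∫ y, F (γo * y) ∂(P.map Y)
      = 1 - (1 / π) * ∫ θ in (0:ℝ)..π, mgf Y P (-γo / (γbar * (1 - c * Real.cos θ))) := by
    simp only [hFdef]
    rw [integral_sub (integrable_const 1) (hIint.const_mul (1 / π))]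
    rw [MeasureTheory.integral_const, MeasureTheory.integral_const_mul, probReal_univ, smul_eq_mul,
      one_mul, hswap]
    congr 1
    congr 1
    exact intervalIntegral.integral_congr fun θ _ => hinner θ
  calc (P {ω | X ω < γo * Y ω}).toReal
      = (∫⁻ y, ENNReal.ofReal (F (γo * y)) ∂(P.map Y)).toReal := by rw [h1, h2]
    _ = ∫ y, F (γo * y) ∂(P.map Y) := h3
    _ = _ := h4
end
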